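/- arXiv:2003.06448 — 3 statements merged into one kernel-verified Lean document; each statement's English description precedes it below -/
import Mathlib

section
/- For any δ > 0, α > 0 and T₀ > 0, there exists a constant Â > 0 such that for every T ∈ (0, T₀], the μ_T-measure of the set {(x,y,z) ∈ ℝⁿ×ℝⁿ×ℝᵐ : U(x) > min U + δ} is at most Â·exp(−(δ−α)/T). -/
noncomputable section

open Real MeasureTheory Filter

/-- The state space ℝⁿ × ℝⁿ × ℝᵐ. -/
abbrev St (n m : ℕ) := (Fin n → ℝ) × (Fin n → ℝ) × (Fin m → ℝ)

/-- `i`-th component of the gradient of a function on ℝᵏ. -/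
def gradp {k : ℕ} (U : (Fin k → ℝ) → ℝ) (x : Fin k → ℝ) (i : Fin k) : ℝ :=
  fderiv ℝ U x (Pi.single i 1)

/-- Partial derivative in the `i`-th x-coordinate. -/
def pX {n m : ℕ} (f : St n m → ℝ) (i : Fin n) (p : St n m) : ℝ :=
  fderiv ℝ f p (Pi.single i 1, 0, 0)

/-- Partial derivative in the `i`-th y-coordinate. -/
def pY {n m : ℕ} (f : St n m → ℝ) (i : Fin n) (p : St n m) : ℝ :=
  fderiv ℝ f p (0, Pi.single i 1, 0)

/-- Partial derivative in the `j`-th z-coordinate. -/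
def pZ {n m : ℕ} (f : St n m → ℝ) (j : Fin m) (p : St n m) : ℝ :=
  fderiv ℝ f p (0, 0, Pi.single j 1)

/-- Squared Euclidean norm of a vector. -/
def sqnorm {k : ℕ} (v : Fin k → ℝ) : ℝ := ∑ i, (v i) ^ 2

/-- Squared Euclidean norm of the full gradient. -/
def gradSq {n m : ℕ} (f : St n m → ℝ) (p : St n m) : ℝ :=
  (∑ i, (pX f i p) ^ 2) + (∑ i, (pY f i p) ^ 2) + (∑ j, (pZ f j p) ^ 2)

/-- The Hamiltonian W(x,y,z) = U(x) + |y|²/2 + |z|²/2. -/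
def Wfun {n m : ℕ} (U : (Fin n → ℝ) → ℝ) (p : St n m) : ℝ :=
  U p.1 + sqnorm p.2.1 / 2 + sqnorm p.2.2 / 2

/-- Normalizing constant Z_T. -/
def Zpart (n m : ℕ) (U : (Fin n → ℝ) → ℝ) (T : ℝ) : ℝ :=
  ∫ p : St n m, Real.exp (-(Wfun U p) / T)

/-- Density of the instantaneous equilibrium μ_T w.r.t. Lebesgue. -/
def muDen (n m : ℕ) (U : (Fin n → ℝ) → ℝ) (T : ℝ) (p : St n m) : ℝ :=
  Real.exp (-(Wfun U p) / T) / Zpart n m U T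

/-- The Gibbs measure μ_T ∝ exp(−W/T). -/
def muT (n m : ℕ) (U : (Fin n → ℝ) → ℝ) (T : ℝ) : Measure (St n m) :=
  volume.withDensity fun p => ENNReal.ofReal (muDen n m U T p)

/-- Generator of the generalised Langevin dynamics at temperature T. -/
def genL {n m : ℕ} (U : (Fin n → ℝ) → ℝ) (A : Matrix (Fin m) (Fin m) ℝ)
    (lam : Matrix (Fin m) (Fin n) ℝ) (T : ℝ) (f : St n m → ℝ) (p : St n m) : ℝ :=
  (∑ i, p.2.1 i * pX f i p)
    - (∑ i, gradp U p.1 i * pY f i p)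
    + (∑ i, (lam.transpose.mulVec p.2.2) i * pY f i p)
    - (∑ j, (lam.mulVec p.2.1) j * pZ f j p)
    - T⁻¹ * (∑ j, (A.transpose.mulVec p.2.2) j * pZ f j p)
    + (∑ i, ∑ j, A i j * pZ (fun q => pZ f j q) i p)

/-- Formal L²(μ_T)-adjoint of the generator. -/
def genLstar {n m : ℕ} (U : (Fin n → ℝ) → ℝ) (A : Matrix (Fin m) (Fin m) ℝ)
    (lam : Matrix (Fin m) (Fin n) ℝ) (T : ℝ) (h : St n m → ℝ) (p : St n m) : ℝ :=
  -(∑ i, p.2.1 i * pX h i p)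
    + (∑ i, gradp U p.1 i * pY h i p)
    - (∑ i, (lam.transpose.mulVec p.2.2) i * pY h i p)
    + (∑ j, (lam.mulVec p.2.1) j * pZ h j p)
    - T⁻¹ * (∑ j, (A.mulVec p.2.2) j * pZ h j p)
    + (∑ i, ∑ j, A i j * pZ (fun q => pZ h j q) i p)

/-- Formal Lebesgue adjoint L_T^⊤ (Fokker–Planck operator). -/
def genLadj {n m : ℕ} (U : (Fin n → ℝ) → ℝ) (A : Matrix (Fin m) (Fin m) ℝ)
    (lam : Matrix (Fin m) (Fin n) ℝ) (T : ℝ) (g : St n m → ℝ) (p : St n m) : ℝ :=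
  -(∑ i, p.2.1 i * pX g i p)
    + (∑ i, (gradp U p.1 i - (lam.transpose.mulVec p.2.2) i) * pY g i p)
    + (∑ j, ((lam.mulVec p.2.1) j + T⁻¹ * (A.transpose.mulVec p.2.2) j) * pZ g j p)
    + T⁻¹ * A.trace * g p
    + (∑ i, ∑ j, A i j * pZ (fun q => pZ g j q) i p)

/-- Operator norm of a matrix (Euclidean → Euclidean). -/
def opNorm {a b : ℕ} (M : Matrix (Fin a) (Fin b) ℝ) : ℝ :=
  sSup {c : ℝ | ∃ v : Fin b → ℝ, sqnorm v ≤ 1 ∧ c = Real.sqrt (sqnorm (M.mulVec v))}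

/-- The Lyapunov function R(x,y,z,T). -/
def Rfun {n m : ℕ} (U : (Fin n → ℝ) → ℝ) (lamInv : Matrix (Fin n) (Fin m) ℝ)
    (δ T : ℝ) (p : St n m) : ℝ :=
  Wfun U p + δ * T * ((∑ i, p.2.1 i * (lamInv.mulVec p.2.2) i) + (∑ i, p.1 i * p.2.1 i) / 2)

/-- Full gradient indexed by x-, y-, z-coordinates. -/
def fullGrad {n m : ℕ} (f : St n m → ℝ) (p : St n m) : (Fin n ⊕ (Fin n ⊕ Fin m)) → ℝ :=
  Sum.elim (fun i => pX f i p) (Sum.elim (fun i => pY f i p) (fun j => pZ f j p))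

/-- Gateaux derivative dΦ(h).g of a map on functions. -/
def gateaux {n m : ℕ} (Φ : (St n m → ℝ) → St n m → ℝ) (h g : St n m → ℝ) (p : St n m) : ℝ :=
  deriv (fun s : ℝ => Φ (fun q => h q + s * g q) p) 0

/-- Γ_{L_T*,Φ}(h) := ½ (L_T*(Φ(h)) − dΦ(h).(L_T* h)). -/
def GammaPhi {n m : ℕ} (U : (Fin n → ℝ) → ℝ) (A : Matrix (Fin m) (Fin m) ℝ)
    (lam : Matrix (Fin m) (Fin n) ℝ) (T : ℝ)
    (Φ : (St n m → ℝ) → St n m → ℝ) (h : St n m → ℝ) (p : St n m) : ℝ :=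
  (genLstar U A lam T (Φ h) p - gateaux Φ h (genLstar U A lam T h) p) / 2

/-- Φ₁(h) = |2∇ₓh + 8S₀(∇_y h + λ⁻¹∇_z h)|²/h. -/
def Phi1 {n m : ℕ} (lamInv : Matrix (Fin n) (Fin m) ℝ) (S0 : ℝ)
    (g : St n m → ℝ) (p : St n m) : ℝ :=
  (∑ i, (2 * pX g i p + 8 * S0 * (pY g i p + (lamInv.mulVec fun j => pZ g j p) i)) ^ 2) / g p

/-- Φ₂(h) = |∇_y h + S₁λ⁻¹∇_z h|²/h. -/
def Phi2 {n m : ℕ} (lamInv : Matrix (Fin n) (Fin m) ℝ) (S1 : ℝ)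
    (g : St n m → ℝ) (p : St n m) : ℝ :=
  (∑ i, (pY g i p + S1 * (lamInv.mulVec fun j => pZ g j p) i) ^ 2) / g p

/-- β(s) = 1 + β₀ + β₁ s + β₂ s². -/
def betaP (β0 β1 β2 s : ℝ) : ℝ := 1 + β0 + β1 * s + β2 * s ^ 2

/-- Ψ_T(h) = Φ₁(h) + Φ₂(h) + β·h ln h. -/
def PsiT {n m : ℕ} (lamInv : Matrix (Fin n) (Fin m) ℝ) (S0 S1 βc : ℝ)
    (g : St n m → ℝ) (p : St n m) : ℝ :=
  Phi1 lamInv S0 g p + Phi2 lamInv S1 g p + βc * (g p * Real.log (g p))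

/-- λ̂² = max(|λ|², |λᵀ|², |λ⁻¹|², |λ⁻¹||λᵀ|). -/
def lamhatSq {n m : ℕ} (lam : Matrix (Fin m) (Fin n) ℝ)
    (lamInv : Matrix (Fin n) (Fin m) ℝ) : ℝ :=
  max (max (opNorm lam ^ 2) (opNorm lam.transpose ^ 2))
    (max (opNorm lamInv ^ 2) (opNorm lamInv * opNorm lam.transpose))


lemma sqnorm_nonneg' {k : ℕ} (v : Fin k → ℝ) : 0 ≤ sqnorm v :=
  Finset.sum_nonneg fun _ _ => sq_nonneg _

lemma continuous_sqnorm' {k : ℕ} : Continuous (sqnorm (k := k)) := by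
  unfold sqnorm; fun_prop

lemma integrable_gauss' {k : ℕ} {c : ℝ} (hc : 0 < c) :
    MeasureTheory.Integrable (fun v : Fin k → ℝ => Real.exp (-(c * sqnorm v))) := by
  have h : ∀ v : Fin k → ℝ, Real.exp (-(c * sqnorm v)) = ∏ i, Real.exp (-c * (v i) ^ 2) := by
    intro v
    rw [← Real.exp_sum]
    congr 1
    simp [sqnorm, Finset.mul_sum, neg_mul]
  simp_rw [h]
  exact MeasureTheory.Integrable.fintype_prod fun _ => integrable_exp_neg_mul_sq hc

/-- Laplace principle for the instantaneous equilibrium μ_T. -/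
theorem stmt0 (n m : ℕ) (hn : 0 < n) (hm : 0 < m) (hnm : n ≤ m)
    (U : (Fin n → ℝ) → ℝ) (hU : ContDiff ℝ (⊤ : ℕ∞) U)
    (D2 : ℝ) (hD2 : ∀ x, ‖fderiv ℝ (fun y => fderiv ℝ U y) x‖ ≤ D2)
    (abar : Fin n → ℝ) (habar : ∀ i, 0 < abar i)
    (r1 r2 Ug : ℝ) (hr1 : 0 < r1) (hr2 : 0 < r2) (hUg : 0 < Ug) (Um UM : ℝ)
    (hUlow : ∀ x, sqnorm (fun i => abar i * x i) + Um ≤ U x)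
    (hUup : ∀ x, U x ≤ sqnorm (fun i => abar i * x i) + UM)
    (hgrad1 : ∀ x, r1 * sqnorm x - Ug ≤ ∑ i, gradp U x i * x i)
    (hgrad2 : ∀ x, sqnorm (gradp U x) ≤ r2 * sqnorm x + Ug)
    (x₀ : Fin n → ℝ) (hx₀ : ∀ x, U x₀ ≤ U x)
    (δ α T₀ : ℝ) (hδ : 0 < δ) (hα : 0 < α) (hT₀ : 0 < T₀) :
    ∃ Ahat : ℝ, 0 < Ahat ∧ ∀ T : ℝ, 0 < T → T ≤ T₀ →
      muT n m U T {p : St n m | U x₀ + δ < U p.1} ≤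
        ENNReal.ofReal (Ahat * Real.exp (-(δ - α) / T)) := by
  classical
  have hNE : Nonempty (Fin n) := ⟨⟨0, hn⟩⟩
  have hUc : Continuous U := hU.continuous
  set am : ℝ := Finset.univ.inf' Finset.univ_nonempty abar with ham_def
  have ham : 0 < am := (Finset.lt_inf'_iff _).2 fun i _ => habar i
  have hquad : ∀ x : Fin n → ℝ, am ^ 2 * sqnorm x + Um ≤ U x := by
    intro x
    refine le_trans (add_le_add ?_ le_rfl) (hUlow x)
    unfold sqnorm
    rw [Finset.mul_sum]
    refine Finset.sum_le_sum fun i _ => ?_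
    rw [mul_pow]
    exact mul_le_mul_of_nonneg_right
      (pow_le_pow_left₀ ham.le (Finset.inf'_le _ (Finset.mem_univ i)) 2) (sq_nonneg _)
  have hIntU : ∀ t : ℝ, 0 < t → ∀ c : ℝ,
      Integrable (fun x : Fin n → ℝ => Real.exp (-(U x - c) / t)) := by
    intro t ht c
    refine Integrable.mono' ((integrable_gauss' (k := n) (c := am ^ 2 / t)
      (by positivity)).const_mul (Real.exp ((c - Um) / t))) ?_ ?_
    · exact (Real.continuous_exp.comp
        ((hUc.sub continuous_const).neg.div_const t)).aestronglyMeasurable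
    · refine Eventually.of_forall fun x => ?_
      rw [Real.norm_eq_abs, abs_of_nonneg (Real.exp_pos _).le, ← Real.exp_add]
      apply Real.exp_le_exp.2
      have hq := hquad x
      calc -(U x - c) / t = (c - U x) / t := by ring
        _ ≤ (c - Um - am ^ 2 * sqnorm x) / t :=
            (div_le_div_iff_of_pos_right ht).2 (by linarith)
        _ = (c - Um) / t + -(am ^ 2 / t * sqnorm x) := by field_simp; ring
  set mU := U x₀ with hmU
  set c₁ : ℝ := mU + δ - α / 2 with hc₁
  set c₂ : ℝ := mU + α / 2 with hc₂
  set K : ℝ := ∫ x : Fin n → ℝ, Real.exp (-(U x - c₁) / T₀) with hK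
  have hK0 : 0 ≤ K := integral_nonneg fun x => (Real.exp_pos _).le
  set B : Set (Fin n → ℝ) := {x | U x < c₂} ∩ Metric.ball x₀ 1 with hB
  have hBopen : IsOpen B := (isOpen_lt hUc continuous_const).inter Metric.isOpen_ball
  have hBx₀ : x₀ ∈ B := ⟨by simp only [Set.mem_setOf_eq, hc₂]; linarith,
    Metric.mem_ball_self one_pos⟩
  have hBpos : 0 < volume B := hBopen.measure_pos _ ⟨x₀, hBx₀⟩
  have hBfin : volume B < ⊤ :=
    lt_of_le_of_lt (measure_mono Set.inter_subset_right) measure_ball_lt_top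
  set v : ℝ := (volume B).toReal with hv
  have hvpos : 0 < v := ENNReal.toReal_pos hBpos.ne' hBfin.ne
  refine ⟨K / v + 1, by positivity, ?_⟩
  intro T hT hTT0
  set A : Set (Fin n → ℝ) := {x | mU + δ < U x} with hA
  have hAmeas : MeasurableSet A := (isOpen_lt continuous_const hUc).measurableSet
  set S : Set (St n m) := {p : St n m | mU + δ < U p.1} with hS
  have hSmeas : MeasurableSet S :=
    (isOpen_lt continuous_const (hUc.comp continuous_fst)).measurableSet
  -- Gaussian factors
  have hGi : ∀ k : ℕ, Integrable (fun y : Fin k → ℝ => Real.exp (-(sqnorm y / 2) / T)) := by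
    intro k
    have h : ∀ y : Fin k → ℝ,
        Real.exp (-(sqnorm y / 2) / T) = Real.exp (-(1 / (2 * T) * sqnorm y)) := by
      intro y; congr 1; field_simp
    simp_rw [h]
    exact integrable_gauss' (by positivity)
  have hIx : Integrable (fun x : Fin n → ℝ => Real.exp (-U x / T)) := by
    have h := hIntU T hT 0
    simpa using h
  have hWs : ∀ p : St n m, Real.exp (-(Wfun U p) / T)
      = Real.exp (-U p.1 / T) *
        (Real.exp (-(sqnorm p.2.1 / 2) / T) * Real.exp (-(sqnorm p.2.2 / 2) / T)) := by
    intro p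
    rw [← Real.exp_add, ← Real.exp_add]
    congr 1
    unfold Wfun
    ring
  have hG2 : Integrable (fun q : (Fin n → ℝ) × (Fin m → ℝ) =>
      Real.exp (-(sqnorm q.1 / 2) / T) * Real.exp (-(sqnorm q.2 / 2) / T)) := by
    rw [Measure.volume_eq_prod]
    exact (hGi n).mul_prod (hGi m)
  have hWint : Integrable (fun p : St n m => Real.exp (-(Wfun U p) / T)) := by
    simp_rw [hWs]
    rw [Measure.volume_eq_prod]
    exact hIx.mul_prod hG2
  haveI hOP : (volume : Measure (St n m)).IsOpenPosMeasure := by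
    have h1 : (volume : Measure ((Fin n → ℝ) × (Fin m → ℝ))).IsOpenPosMeasure := inferInstance
    exact @MeasureTheory.Measure.prod.instIsOpenPosMeasure _ _ _ _ _ _ inferInstance _ _ h1
      inferInstance
  have hZpos : 0 < Zpart n m U T := by
    rw [Zpart, integral_pos_iff_support_of_nonneg (fun p => (Real.exp_pos _).le) hWint]
    have h : Function.support (fun p : St n m => Real.exp (-(Wfun U p) / T)) = Set.univ :=
      Set.eq_univ_of_forall fun p => (Real.exp_pos _).ne'
    rw [h]
    exact isOpen_univ.measure_pos _ Set.univ_nonempty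
  set F : (Fin n → ℝ) → ENNReal := fun x => ENNReal.ofReal (Real.exp (-U x / T)) with hF
  have hFmeas : Measurable F :=
    (ENNReal.continuous_ofReal.comp (Real.continuous_exp.comp
      (hUc.neg.div_const T))).measurable
  have hGmeas : ∀ k : ℕ, Measurable
      (fun y : Fin k → ℝ => ENNReal.ofReal (Real.exp (-(sqnorm y / 2) / T))) := by
    intro k
    exact (ENNReal.continuous_ofReal.comp (Real.continuous_exp.comp
      ((continuous_sqnorm'.div_const 2).neg.div_const T))).measurable
  set Gy : ENNReal := ∫⁻ y : Fin n → ℝ, ENNReal.ofReal (Real.exp (-(sqnorm y / 2) / T)) with hGy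
  set Gz : ENNReal := ∫⁻ z : Fin m → ℝ, ENNReal.ofReal (Real.exp (-(sqnorm z / 2) / T)) with hGz
  have hGtop : ∀ k : ℕ,
      (∫⁻ y : Fin k → ℝ, ENNReal.ofReal (Real.exp (-(sqnorm y / 2) / T))) ≠ ⊤ :=
    fun k => (Integrable.lintegral_lt_top (hGi k)).ne
  have hGpos : ∀ k : ℕ,
      (∫⁻ y : Fin k → ℝ, ENNReal.ofReal (Real.exp (-(sqnorm y / 2) / T))) ≠ 0 := by
    intro k
    refine ((lintegral_pos_iff_support (hGmeas k)).2 ?_).ne'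
    have h : Function.support
        (fun y : Fin k → ℝ => ENNReal.ofReal (Real.exp (-(sqnorm y / 2) / T))) = Set.univ :=
      Set.eq_univ_of_forall fun y => (ENNReal.ofReal_pos.2 (Real.exp_pos _)).ne'
    rw [h]
    exact isOpen_univ.measure_pos _ Set.univ_nonempty
  have hG2meas : Measurable (fun q : (Fin n → ℝ) × (Fin m → ℝ) =>
      ENNReal.ofReal (Real.exp (-(sqnorm q.1 / 2) / T)) *
        ENNReal.ofReal (Real.exp (-(sqnorm q.2 / 2) / T))) :=
    ((hGmeas n).comp measurable_fst).mul ((hGmeas m).comp measurable_snd)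
  have hWs' : ∀ p : St n m, ENNReal.ofReal (Real.exp (-(Wfun U p) / T))
      = F p.1 * (ENNReal.ofReal (Real.exp (-(sqnorm p.2.1 / 2) / T)) *
          ENNReal.ofReal (Real.exp (-(sqnorm p.2.2 / 2) / T))) := by
    intro p
    rw [hWs p, ENNReal.ofReal_mul (Real.exp_pos _).le, ENNReal.ofReal_mul (Real.exp_pos _).le]
  -- measure identity
  have hmu : muT n m U T S
      = (∫⁻ p in S, ENNReal.ofReal (Real.exp (-(Wfun U p) / T))) /
          ENNReal.ofReal (Zpart n m U T) := by
    rw [muT, withDensity_apply _ hSmeas]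
    simp_rw [muDen, ENNReal.ofReal_div_of_pos hZpos, div_eq_mul_inv]
    rw [lintegral_mul_const' _ _ (ENNReal.inv_ne_top.2 (ENNReal.ofReal_pos.2 hZpos).ne')]
  have hNum : (∫⁻ p in S, ENNReal.ofReal (Real.exp (-(Wfun U p) / T)))
      = (∫⁻ x, A.indicator F x) * (Gy * Gz) := by
    rw [← lintegral_indicator hSmeas]
    have h : ∀ p : St n m,
        S.indicator (fun p : St n m => ENNReal.ofReal (Real.exp (-(Wfun U p) / T))) p
        = A.indicator F p.1 *
          ((fun q : (Fin n → ℝ) × (Fin m → ℝ) =>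
            ENNReal.ofReal (Real.exp (-(sqnorm q.1 / 2) / T)) *
            ENNReal.ofReal (Real.exp (-(sqnorm q.2 / 2) / T))) p.2) := by
      intro p
      by_cases hp : p.1 ∈ A
      · rw [Set.indicator_of_mem (show p ∈ S from hp), Set.indicator_of_mem hp, hWs' p]
      · rw [Set.indicator_of_notMem (show p ∉ S from hp), Set.indicator_of_notMem hp, zero_mul]
    simp_rw [h]
    rw [Measure.volume_eq_prod, lintegral_prod_mul (hFmeas.indicator hAmeas).aemeasurable
      hG2meas.aemeasurable,
      Measure.volume_eq_prod, lintegral_prod_mul (hGmeas n).aemeasurable (hGmeas m).aemeasurable]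
  have hDen : ENNReal.ofReal (Zpart n m U T) = (∫⁻ x, F x) * (Gy * Gz) := by
    rw [Zpart, ofReal_integral_eq_lintegral_ofReal hWint
      (Eventually.of_forall fun p => (Real.exp_pos _).le)]
    simp_rw [hWs']
    rw [Measure.volume_eq_prod, lintegral_prod_mul hFmeas.aemeasurable
      hG2meas.aemeasurable,
      Measure.volume_eq_prod, lintegral_prod_mul (hGmeas n).aemeasurable (hGmeas m).aemeasurable]
  have hGG0 : Gy * Gz ≠ 0 := mul_ne_zero (hGpos n) (hGpos m)
  have hGGt : Gy * Gz ≠ ⊤ := ENNReal.mul_ne_top (hGtop n) (hGtop m)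
  -- numerator bound
  have hNA : (∫⁻ x, A.indicator F x) ≤ ENNReal.ofReal (Real.exp (-c₁ / T) * K) := by
    have hpt : ∀ x, A.indicator F x
        ≤ ENNReal.ofReal (Real.exp (-c₁ / T) * Real.exp (-(U x - c₁) / T₀)) := by
      intro x
      by_cases hx : x ∈ A
      · rw [Set.indicator_of_mem hx]
        apply ENNReal.ofReal_le_ofReal
        rw [← Real.exp_add]
        apply Real.exp_le_exp.2
        have hx' : mU + δ < U x := hx
        have h1 : 0 ≤ U x - c₁ := by rw [hc₁]; linarith
        have h2 : (U x - c₁) / T₀ ≤ (U x - c₁) / T := by gcongr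
        calc -U x / T = -c₁ / T + -(U x - c₁) / T := by ring
          _ ≤ -c₁ / T + -(U x - c₁) / T₀ := by
              simp only [neg_div]
              linarith
      · rw [Set.indicator_of_notMem hx]
        exact zero_le
    calc (∫⁻ x, A.indicator F x)
        ≤ ∫⁻ x, ENNReal.ofReal (Real.exp (-c₁ / T) * Real.exp (-(U x - c₁) / T₀)) :=
          lintegral_mono hpt
      _ = ENNReal.ofReal (Real.exp (-c₁ / T)) *
          ∫⁻ x, ENNReal.ofReal (Real.exp (-(U x - c₁) / T₀)) := by
          simp_rw [ENNReal.ofReal_mul (Real.exp_pos _).le]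
          rw [lintegral_const_mul' _ _ ENNReal.ofReal_ne_top]
      _ = ENNReal.ofReal (Real.exp (-c₁ / T)) * ENNReal.ofReal K := by
          rw [← ofReal_integral_eq_lintegral_ofReal (hIntU T₀ hT₀ c₁)
            (Eventually.of_forall fun x => (Real.exp_pos _).le)]
      _ = ENNReal.ofReal (Real.exp (-c₁ / T) * K) :=
          (ENNReal.ofReal_mul (Real.exp_pos _).le).symm
  -- denominator bound
  have hDA : ENNReal.ofReal (Real.exp (-c₂ / T) * v) ≤ ∫⁻ x, F x := by
    rw [ENNReal.ofReal_mul (Real.exp_pos _).le, hv, ENNReal.ofReal_toReal hBfin.ne,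
      ← setLIntegral_const]
    calc (∫⁻ _ in B, ENNReal.ofReal (Real.exp (-c₂ / T)))
        ≤ ∫⁻ x in B, F x := by
          refine setLIntegral_mono hFmeas fun x hx => ?_
          apply ENNReal.ofReal_le_ofReal
          apply Real.exp_le_exp.2
          have hx' : U x < c₂ := hx.1
          gcongr
          
      _ ≤ ∫⁻ x, F x := setLIntegral_le_lintegral _ _
  -- conclusion
  rw [hmu, hNum, hDen, ENNReal.mul_div_mul_right _ _ hGG0 hGGt]
  calc (∫⁻ x, A.indicator F x) / (∫⁻ x, F x)
      ≤ ENNReal.ofReal (Real.exp (-c₁ / T) * K) / ENNReal.ofReal (Real.exp (-c₂ / T) * v) :=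
        ENNReal.div_le_div hNA hDA
    _ = ENNReal.ofReal ((Real.exp (-c₁ / T) * K) / (Real.exp (-c₂ / T) * v)) :=
        (ENNReal.ofReal_div_of_pos (by positivity)).symm
    _ ≤ ENNReal.ofReal ((K / v + 1) * Real.exp (-(δ - α) / T)) := by
        apply ENNReal.ofReal_le_ofReal
        have he : Real.exp (-c₁ / T) / Real.exp (-c₂ / T) = Real.exp (-(δ - α) / T) := by
          rw [← Real.exp_sub]
          congr 1
          rw [hc₁, hc₂]
          ring
        calc (Real.exp (-c₁ / T) * K) / (Real.exp (-c₂ / T) * v)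
            = (K / v) * (Real.exp (-c₁ / T) / Real.exp (-c₂ / T)) := by ring
          _ = (K / v) * Real.exp (-(δ - α) / T) := by rw [he]
          _ ≤ (K / v + 1) * Real.exp (-(δ - α) / T) := by
              apply mul_le_mul_of_nonneg_right (by linarith) (Real.exp_pos _).le
end
end

section
/- Let M be a constant real matrix acting on full gradients (so that M∇h is a vector of linear combinations of the partial derivatives of h), and define Φ*(h) := |M∇h|²/h. Then for every T > 0 and every smooth, strictly positive function h on ℝⁿ×ℝⁿ×ℝᵐ: Γ_{L_T*, Φ*}(h) ≥ (M∇h)·[L_T*, M∇]h / h, where [L_T*, M∇]h denotes the commutator vector with i-th component L_T*((M∇h)_i) − (M∇(L_T* h))_i. -/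
noncomputable section

open Real MeasureTheory Filter

namespace Stmt4Aux

variable {n m : ℕ}

/-- directional derivative -/
def pd (e : St n m) (f : St n m → ℝ) (p : St n m) : ℝ := fderiv ℝ f p e

lemma pX_pd (f : St n m → ℝ) (i : Fin n) (p : St n m) :
    pX f i p = pd (Pi.single i 1, 0, 0) f p := rfl
lemma pY_pd (f : St n m → ℝ) (i : Fin n) (p : St n m) :
    pY f i p = pd (0, Pi.single i 1, 0) f p := rfl
lemma pZ_pd (f : St n m → ℝ) (j : Fin m) (p : St n m) :
    pZ f j p = pd (0, 0, Pi.single j 1) f p := rfl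

lemma pd_add (e : St n m) {f g : St n m → ℝ} {p : St n m} (hf : DifferentiableAt ℝ f p)
    (hg : DifferentiableAt ℝ g p) :
    pd e (fun q => f q + g q) p = pd e f p + pd e g p := by
  simp [pd, fderiv_fun_add hf hg]

lemma pd_const_mul (e : St n m) {f : St n m → ℝ} {p : St n m}
    (hf : DifferentiableAt ℝ f p) (c : ℝ) :
    pd e (fun q => c * f q) p = c * pd e f p := by
  simp [pd, fderiv_const_mul hf c]

lemma pd_mul (e : St n m) {f g : St n m → ℝ} {p : St n m} (hf : DifferentiableAt ℝ f p)
    (hg : DifferentiableAt ℝ g p) :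
    pd e (fun q => f q * g q) p = f p * pd e g p + g p * pd e f p := by
  simp [pd, fderiv_fun_mul hf hg]

lemma pd_sum (e : St n m) {ι : Type} [Fintype ι] {f : ι → St n m → ℝ} {p : St n m}
    (hf : ∀ i, DifferentiableAt ℝ (f i) p) :
    pd e (fun q => ∑ i, f i q) p = ∑ i, pd e (f i) p := by
  simp [pd, fderiv_fun_sum (fun i _ => hf i)]

lemma pd_inv (e : St n m) {f : St n m → ℝ} {p : St n m}
    (hf : DifferentiableAt ℝ f p) (h0 : f p ≠ 0) :
    pd e (fun q => (f q)⁻¹) p = - pd e f p / f p ^ 2 := by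
  have hinv : DifferentiableAt ℝ (fun q => (f q)⁻¹) p := hf.inv h0
  have h1 : (fun q => f q * (f q)⁻¹) =ᶠ[nhds p] (fun _ => (1:ℝ)) := by
    filter_upwards [hf.continuousAt.eventually_ne h0] with q hq
    field_simp
  have h2 : pd e (fun q => f q * (f q)⁻¹) p = 0 := by
    simp [pd, h1.fderiv_eq]
  rw [pd_mul e hf hinv] at h2
  have hc : f p * (f p)⁻¹ = 1 := mul_inv_cancel₀ h0
  rw [eq_div_iff (pow_ne_zero 2 h0)]
  linear_combination f p * h2 - pd e f p * hc

lemma contDiff_pd (e : St n m) {f : St n m → ℝ} (hf : ContDiff ℝ (⊤:ℕ∞) f) :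
    ContDiff ℝ (⊤:ℕ∞) (pd e f) :=
  (hf.fderiv_right (m := (⊤:ℕ∞)) (by exact_mod_cast le_top)).clm_apply contDiff_const

lemma diff_of_cd {f : St n m → ℝ} (hf : ContDiff ℝ (⊤:ℕ∞) f) : Differentiable ℝ f :=
  hf.differentiable (by simp)

/-- triple sum reorder -/
lemma sum_comm3 {α β γ : Type} [Fintype α] [Fintype β] [Fintype γ] (f : α → β → γ → ℝ) :
    ∑ a, ∑ b, ∑ i, f a b i = ∑ i, ∑ a, ∑ b, f a b i := by
  calc ∑ a, ∑ b, ∑ i, f a b i = ∑ a, ∑ i, ∑ b, f a b i :=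
        Finset.sum_congr rfl fun a _ => Finset.sum_comm
    _ = ∑ i, ∑ a, ∑ b, f a b i := Finset.sum_comm


section ops
variable {n m : ℕ} (Uf : (Fin n → ℝ) → ℝ) (A : Matrix (Fin m) (Fin m) ℝ)
  (lam : Matrix (Fin m) (Fin n) ℝ) (T : ℝ)

lemma genLstar_const (c : ℝ) (p : St n m) :
    genLstar Uf A lam T (fun _ => c) p = 0 := by
  simp [genLstar, pX, pY, pZ]

lemma genLstar_mul {f g : St n m → ℝ} (hf : ContDiff ℝ (⊤:ℕ∞) f)
    (hg : ContDiff ℝ (⊤:ℕ∞) g) (p : St n m) :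
    genLstar Uf A lam T (fun q => f q * g q) p
      = f p * genLstar Uf A lam T g p + g p * genLstar Uf A lam T f p
        + ∑ i, ∑ j, A i j * (pZ f i p * pZ g j p + pZ g i p * pZ f j p) := by
  have hfd : Differentiable ℝ f := diff_of_cd hf
  have hgd : Differentiable ℝ g := diff_of_cd hg
  have hfzd : ∀ j, Differentiable ℝ (fun q => pZ f j q) := fun j => diff_of_cd (contDiff_pd _ hf)
  have hgzd : ∀ j, Differentiable ℝ (fun q => pZ g j q) := fun j => diff_of_cd (contDiff_pd _ hg)
  have hpdmul : ∀ (e : St n m) (q : St n m),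
      pd e (fun r => f r * g r) q = f q * pd e g q + g q * pd e f q :=
    fun e q => pd_mul e (hfd q) (hgd q)
  have hsum : ∀ (ι : Type) (_ : Fintype ι) (c : ι → ℝ) (e : ι → St n m),
      ∑ i, c i * pd (e i) (fun q => f q * g q) p
        = f p * ∑ i, c i * pd (e i) g p + g p * ∑ i, c i * pd (e i) f p := by
    intro ι _ c e
    rw [Finset.mul_sum, Finset.mul_sum, ← Finset.sum_add_distrib]
    exact Finset.sum_congr rfl fun i _ => by rw [hpdmul]; ring
  have hsumX : ∀ c : Fin n → ℝ, ∑ i, c i * pX (fun q => f q * g q) i p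
      = f p * ∑ i, c i * pX g i p + g p * ∑ i, c i * pX f i p :=
    fun c => hsum _ _ c (fun i => (Pi.single i 1, 0, 0))
  have hsumY : ∀ c : Fin n → ℝ, ∑ i, c i * pY (fun q => f q * g q) i p
      = f p * ∑ i, c i * pY g i p + g p * ∑ i, c i * pY f i p :=
    fun c => hsum _ _ c (fun i => (0, Pi.single i 1, 0))
  have hsumZ : ∀ c : Fin m → ℝ, ∑ j, c j * pZ (fun q => f q * g q) j p
      = f p * ∑ j, c j * pZ g j p + g p * ∑ j, c j * pZ f j p :=
    fun c => hsum _ _ c (fun j => (0, 0, Pi.single j 1))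
  have h2 : ∀ (i j : Fin m), pZ (fun q => pZ (fun r => f r * g r) j q) i p
      = f p * pZ (fun q => pZ g j q) i p + g p * pZ (fun q => pZ f j q) i p
        + (pZ f i p * pZ g j p + pZ g i p * pZ f j p) := by
    intro i j
    have hfun : (fun q => pZ (fun r => f r * g r) j q)
        = fun q => f q * pZ g j q + g q * pZ f j q := funext fun q => hpdmul _ q
    rw [pZ_pd, hfun, pd_add (f := fun q => f q * pZ g j q) (g := fun q => g q * pZ f j q) _
        ((hfd p).mul (hgzd j p)) ((hgd p).mul (hfzd j p)),
      pd_mul _ (hfd p) (hgzd j p), pd_mul _ (hgd p) (hfzd j p)]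
    simp only [pZ_pd]
    ring
  have hG6 : ∑ i, ∑ j, A i j * pZ (fun q => pZ (fun r => f r * g r) j q) i p
      = f p * (∑ i, ∑ j, A i j * pZ (fun q => pZ g j q) i p)
        + g p * (∑ i, ∑ j, A i j * pZ (fun q => pZ f j q) i p)
        + ∑ i, ∑ j, A i j * (pZ f i p * pZ g j p + pZ g i p * pZ f j p) := by
    rw [Finset.mul_sum, Finset.mul_sum, ← Finset.sum_add_distrib, ← Finset.sum_add_distrib]
    refine Finset.sum_congr rfl fun i _ => ?_
    rw [Finset.mul_sum, Finset.mul_sum, ← Finset.sum_add_distrib, ← Finset.sum_add_distrib]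
    refine Finset.sum_congr rfl fun j _ => ?_
    rw [h2 i j]; ring
  unfold genLstar
  rw [hsumX, hsumY, hsumY, hsumZ, hsumZ, hG6]
  ring

end ops


section ops2
variable {n m : ℕ} (Uf : (Fin n → ℝ) → ℝ) (A : Matrix (Fin m) (Fin m) ℝ)
  (lam : Matrix (Fin m) (Fin n) ℝ) (T : ℝ)

lemma genLstar_sum {κ : Type} [Fintype κ] (f : κ → St n m → ℝ)
    (hf : ∀ a, ContDiff ℝ (⊤:ℕ∞) (f a)) (p : St n m) :
    genLstar Uf A lam T (fun q => ∑ a, f a q) p = ∑ a, genLstar Uf A lam T (f a) p := by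
  have hfd : ∀ a, Differentiable ℝ (f a) := fun a => diff_of_cd (hf a)
  have hfzd : ∀ a j, Differentiable ℝ (fun q => pZ (f a) j q) :=
    fun a j => diff_of_cd (contDiff_pd _ (hf a))
  have hpdsum : ∀ (e : St n m) (q : St n m),
      pd e (fun r => ∑ a, f a r) q = ∑ a, pd e (f a) q :=
    fun e q => pd_sum e (fun a => hfd a q)
  have hsum : ∀ (ι : Type) (_ : Fintype ι) (c : ι → ℝ) (e : ι → St n m),
      ∑ i, c i * pd (e i) (fun q => ∑ a, f a q) p = ∑ a, ∑ i, c i * pd (e i) (f a) p := by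
    intro ι _ c e
    rw [Finset.sum_comm]
    exact Finset.sum_congr rfl fun i _ => by rw [hpdsum, Finset.mul_sum]
  have hsumX : ∀ c : Fin n → ℝ, ∑ i, c i * pX (fun q => ∑ a, f a q) i p
      = ∑ a, ∑ i, c i * pX (f a) i p := fun c => hsum _ _ c (fun i => (Pi.single i 1, 0, 0))
  have hsumY : ∀ c : Fin n → ℝ, ∑ i, c i * pY (fun q => ∑ a, f a q) i p
      = ∑ a, ∑ i, c i * pY (f a) i p := fun c => hsum _ _ c (fun i => (0, Pi.single i 1, 0))
  have hsumZ : ∀ c : Fin m → ℝ, ∑ j, c j * pZ (fun q => ∑ a, f a q) j p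
      = ∑ a, ∑ j, c j * pZ (f a) j p := fun c => hsum _ _ c (fun j => (0, 0, Pi.single j 1))
  have h2 : ∀ (i j : Fin m), pZ (fun q => pZ (fun r => ∑ a, f a r) j q) i p
      = ∑ a, pZ (fun q => pZ (f a) j q) i p := by
    intro i j
    have hfun : (fun q => pZ (fun r => ∑ a, f a r) j q) = fun q => ∑ a, pZ (f a) j q :=
      funext fun q => hpdsum _ q
    rw [pZ_pd, hfun]
    exact pd_sum _ (fun a => hfzd a j p)
  have hG6 : ∑ i, ∑ j, A i j * pZ (fun q => pZ (fun r => ∑ a, f a r) j q) i p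
      = ∑ a, ∑ i, ∑ j, A i j * pZ (fun q => pZ (f a) j q) i p := by
    rw [show ∑ i, ∑ j, A i j * pZ (fun q => pZ (fun r => ∑ a, f a r) j q) i p
        = ∑ i, ∑ j, ∑ a, A i j * pZ (fun q => pZ (f a) j q) i p from
      Finset.sum_congr rfl fun i _ => Finset.sum_congr rfl fun j _ => by
        rw [h2 i j, Finset.mul_sum]]
    exact sum_comm3 _
  unfold genLstar
  rw [hsumX, hsumY, hsumY, hsumZ, hsumZ, hG6]
  simp only [Finset.sum_add_distrib, Finset.sum_sub_distrib, Finset.sum_neg_distrib,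
    ← Finset.mul_sum]

lemma genLstar_inv {h : St n m → ℝ} (hh : ContDiff ℝ (⊤:ℕ∞) h) (hpos : ∀ q, 0 < h q)
    (p : St n m) :
    genLstar Uf A lam T (fun q => (h q)⁻¹) p
      = -(genLstar Uf A lam T h p) / h p ^ 2
        + 2 * (∑ i, ∑ j, A i j * (pZ h i p * pZ h j p)) / h p ^ 3 := by
  have hne : ∀ q, h q ≠ 0 := fun q => ne_of_gt (hpos q)
  have hinv : ContDiff ℝ (⊤:ℕ∞) (fun q => (h q)⁻¹) := hh.inv hne
  have h1 : (fun q => h q * (h q)⁻¹) = fun _ => (1:ℝ) := funext fun q => mul_inv_cancel₀ (hne q)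
  have h2 := genLstar_mul Uf A lam T hh hinv p
  rw [h1, genLstar_const] at h2
  have hz : ∀ a : Fin m, pZ (fun q => (h q)⁻¹) a p = - pZ h a p / h p ^ 2 :=
    fun a => pd_inv _ (diff_of_cd hh p) (hne p)
  simp only [hz] at h2
  have hS : ∑ i, ∑ j, A i j * (pZ h i p * (- pZ h j p / h p ^ 2)
        + (- pZ h i p / h p ^ 2) * pZ h j p)
      = (-2 / h p ^ 2) * ∑ i, ∑ j, A i j * (pZ h i p * pZ h j p) := by
    rw [Finset.mul_sum]
    refine Finset.sum_congr rfl fun i _ => ?_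
    rw [Finset.mul_sum]
    exact Finset.sum_congr rfl fun j _ => by ring
  rw [hS] at h2
  have hc : h p * (h p)⁻¹ = 1 := mul_inv_cancel₀ (hne p)
  linear_combination (-(h p)⁻¹) * h2
    - genLstar Uf A lam T (fun q => (h q)⁻¹) p * hc
end ops2

section ops3
variable {n m k : ℕ} (Uf : (Fin n → ℝ) → ℝ) (A : Matrix (Fin m) (Fin m) ℝ)
  (lam : Matrix (Fin m) (Fin n) ℝ) (T : ℝ)

lemma contDiff_coordY (i : Fin n) : ContDiff ℝ (⊤:ℕ∞) (fun p : St n m => p.2.1 i) :=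
  contDiff_pi.mp (contDiff_fst.comp contDiff_snd) i

lemma contDiff_coordZ (j : Fin m) : ContDiff ℝ (⊤:ℕ∞) (fun p : St n m => p.2.2 j) :=
  contDiff_pi.mp (contDiff_snd.comp contDiff_snd) j

lemma contDiff_gradp (hU : ContDiff ℝ (⊤:ℕ∞) Uf) (i : Fin n) :
    ContDiff ℝ (⊤:ℕ∞) (fun p : St n m => gradp Uf p.1 i) := by
  have h1 : ContDiff ℝ (⊤:ℕ∞) (fun x : Fin n → ℝ => gradp Uf x i) :=
    (hU.fderiv_right (m := (⊤:ℕ∞)) (by exact_mod_cast le_top)).clm_apply contDiff_const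
  exact h1.comp (contDiff_fst : ContDiff ℝ (⊤:ℕ∞) (fun p : St n m => p.1))

lemma contDiff_genLstar (hU : ContDiff ℝ (⊤:ℕ∞) Uf) {h : St n m → ℝ}
    (hh : ContDiff ℝ (⊤:ℕ∞) h) :
    ContDiff ℝ (⊤:ℕ∞) (genLstar Uf A lam T h) := by
  have hx : ∀ i : Fin n, ContDiff ℝ (⊤:ℕ∞) (fun p => pX h i p) :=
    fun i => contDiff_pd _ hh
  have hy : ∀ i : Fin n, ContDiff ℝ (⊤:ℕ∞) (fun p => pY h i p) :=
    fun i => contDiff_pd _ hh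
  have hz : ∀ j : Fin m, ContDiff ℝ (⊤:ℕ∞) (fun p => pZ h j p) :=
    fun j => contDiff_pd _ hh
  have hzz : ∀ (i j : Fin m), ContDiff ℝ (⊤:ℕ∞) (fun p => pZ (fun q => pZ h j q) i p) :=
    fun i j => contDiff_pd _ (contDiff_pd _ hh)
  have hlamY : ∀ i : Fin n, ContDiff ℝ (⊤:ℕ∞) (fun p : St n m => lam.transpose.mulVec p.2.2 i) := by
    intro i
    have : (fun p : St n m => lam.transpose.mulVec p.2.2 i)
        = fun p => ∑ j, lam.transpose i j * p.2.2 j := by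
      funext p; simp [Matrix.mulVec, dotProduct]
    rw [this]
    exact ContDiff.sum fun j _ => contDiff_const.mul (contDiff_coordZ j)
  have hlamZ : ∀ j : Fin m, ContDiff ℝ (⊤:ℕ∞) (fun p : St n m => lam.mulVec p.2.1 j) := by
    intro j
    have : (fun p : St n m => lam.mulVec p.2.1 j) = fun p => ∑ i, lam j i * p.2.1 i := by
      funext p; simp [Matrix.mulVec, dotProduct]
    rw [this]
    exact ContDiff.sum fun i _ => contDiff_const.mul (contDiff_coordY i)
  have hAZ : ∀ j : Fin m, ContDiff ℝ (⊤:ℕ∞) (fun p : St n m => A.mulVec p.2.2 j) := by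
    intro j
    have : (fun p : St n m => A.mulVec p.2.2 j) = fun p => ∑ i, A j i * p.2.2 i := by
      funext p; simp [Matrix.mulVec, dotProduct]
    rw [this]
    exact ContDiff.sum fun i _ => contDiff_const.mul (contDiff_coordZ i)
  unfold genLstar
  refine ContDiff.add (ContDiff.sub (ContDiff.add (ContDiff.sub (ContDiff.add
    (ContDiff.neg ?_) ?_) ?_) ?_) ?_) ?_
  · exact ContDiff.sum fun i _ => (contDiff_coordY i).mul (hx i)
  · exact ContDiff.sum fun i _ => (contDiff_gradp Uf hU i).mul (hy i)
  · exact ContDiff.sum fun i _ => (hlamY i).mul (hy i)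
  · exact ContDiff.sum fun j _ => (hlamZ j).mul (hz j)
  · exact contDiff_const.mul (ContDiff.sum fun j _ => (hAZ j).mul (hz j))
  · exact ContDiff.sum fun i _ => ContDiff.sum fun j _ => contDiff_const.mul (hzz i j)

lemma contDiff_vf (Mm : Matrix (Fin k) (Fin n ⊕ (Fin n ⊕ Fin m)) ℝ)
    {h : St n m → ℝ} (hh : ContDiff ℝ (⊤:ℕ∞) h) (i : Fin k) :
    ContDiff ℝ (⊤:ℕ∞) (fun q => Mm.mulVec (fullGrad h q) i) := by
  have : (fun q => Mm.mulVec (fullGrad h q) i) = fun q => ∑ α, Mm i α * fullGrad h q α := by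
    funext q; simp [Matrix.mulVec, dotProduct]
  rw [this]
  refine ContDiff.sum fun α _ => contDiff_const.mul ?_
  rcases α with i' | i' | j'
  · exact (contDiff_pd ((Pi.single i' 1, 0, 0) : St n m) hh : )
  · exact (contDiff_pd ((0, Pi.single i' 1, 0) : St n m) hh : )
  · exact (contDiff_pd ((0, 0, Pi.single j' 1) : St n m) hh : )
end ops3

section ops4
variable {n m k : ℕ}

lemma gateaux_eq {h g : St n m → ℝ} (hh : Differentiable ℝ h) (hg : Differentiable ℝ g)
    (Mm : Matrix (Fin k) (Fin n ⊕ (Fin n ⊕ Fin m)) ℝ) (p : St n m) (hp0 : h p ≠ 0) :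
    gateaux (fun f q => sqnorm (Mm.mulVec (fullGrad f q)) / f q) h g p
      = 2 * (∑ i, Mm.mulVec (fullGrad h p) i * Mm.mulVec (fullGrad g p) i) / h p
        - (∑ i, (Mm.mulVec (fullGrad h p) i) ^ 2) * g p / h p ^ 2 := by
  have hlin : ∀ (e : St n m) (s : ℝ), pd e (fun q => h q + s * g q) p
      = pd e h p + s * pd e g p := by
    intro e s
    rw [pd_add e (hh p) ((hg p).const_mul s), pd_const_mul e (hg p)]
  have hfg : ∀ (s : ℝ) (α : Fin n ⊕ (Fin n ⊕ Fin m)),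
      fullGrad (fun q => h q + s * g q) p α = fullGrad h p α + s * fullGrad g p α := by
    intro s α
    rcases α with i | i | j
    · exact hlin (Pi.single i 1, 0, 0) s
    · exact hlin (0, Pi.single i 1, 0) s
    · exact hlin (0, 0, Pi.single j 1) s
  have hmv : ∀ (s : ℝ) (i : Fin k), Mm.mulVec (fullGrad (fun q => h q + s * g q) p) i
      = Mm.mulVec (fullGrad h p) i + s * Mm.mulVec (fullGrad g p) i := by
    intro s i
    simp only [Matrix.mulVec, dotProduct, hfg s]
    rw [Finset.mul_sum, ← Finset.sum_add_distrib]
    exact Finset.sum_congr rfl fun α _ => by ring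
  have hfun : (fun s : ℝ => sqnorm (Mm.mulVec (fullGrad (fun q => h q + s * g q) p))
        / (h p + s * g p))
      = fun s => (∑ i, (Mm.mulVec (fullGrad h p) i + s * Mm.mulVec (fullGrad g p) i) ^ 2)
        / (h p + s * g p) := by
    funext s
    congr 1
    unfold sqnorm
    exact Finset.sum_congr rfl fun i _ => by rw [hmv]
  unfold gateaux
  rw [show (fun s : ℝ => sqnorm (Mm.mulVec (fullGrad (fun q => h q + s * g q) p))
        / ((fun q => h q + s * g q) p))
      = fun s => (∑ i, (Mm.mulVec (fullGrad h p) i + s * Mm.mulVec (fullGrad g p) i) ^ 2)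
        / (h p + s * g p) from hfun]
  have hN : HasDerivAt (fun s : ℝ =>
      ∑ i, (Mm.mulVec (fullGrad h p) i + s * Mm.mulVec (fullGrad g p) i) ^ 2)
      (∑ i, 2 * (Mm.mulVec (fullGrad h p) i) * Mm.mulVec (fullGrad g p) i) 0 := by
    have hterm : ∀ i : Fin k, HasDerivAt (fun s : ℝ =>
        (Mm.mulVec (fullGrad h p) i + s * Mm.mulVec (fullGrad g p) i) ^ 2)
        (2 * (Mm.mulVec (fullGrad h p) i) * Mm.mulVec (fullGrad g p) i) 0 := by
      intro i
      have h1 : HasDerivAt (fun s : ℝ => Mm.mulVec (fullGrad h p) i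
          + s * Mm.mulVec (fullGrad g p) i) (Mm.mulVec (fullGrad g p) i) 0 := by
        simpa using ((hasDerivAt_id (0:ℝ)).mul_const (Mm.mulVec (fullGrad g p) i)).const_add
          (Mm.mulVec (fullGrad h p) i)
      simpa using h1.fun_pow 2
    simpa using HasDerivAt.fun_sum (fun i (_ : i ∈ Finset.univ) => hterm i)
  have hD : HasDerivAt (fun s : ℝ => h p + s * g p) (g p) 0 := by
    simpa using ((hasDerivAt_id (0:ℝ)).mul_const (g p)).const_add (h p)
  have hden : (fun s : ℝ => h p + s * g p) 0 ≠ 0 := by simpa using hp0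
  have hQ := hN.fun_div hD hden
  rw [hQ.deriv]
  have e1 : h p + 0 * g p = h p := by ring
  rw [e1]
  have e2 : (∑ i, (Mm.mulVec (fullGrad h p) i + 0 * Mm.mulVec (fullGrad g p) i) ^ 2)
      = ∑ i, (Mm.mulVec (fullGrad h p) i) ^ 2 :=
    Finset.sum_congr rfl fun i _ => by ring
  rw [e2]
  have e3 : (∑ i, 2 * Mm.mulVec (fullGrad h p) i * Mm.mulVec (fullGrad g p) i)
      = 2 * ∑ i, Mm.mulVec (fullGrad h p) i * Mm.mulVec (fullGrad g p) i := by
    rw [Finset.mul_sum]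
    exact Finset.sum_congr rfl fun i _ => by ring
  rw [e3]
  field_simp
end ops4

end Stmt4Aux

open Stmt4Aux

/-- lower bound on Γ_{L_T*,Φ*} for Φ*(h) = |M∇h|²/h via the commutator. -/
theorem stmt4 (n m : ℕ) (hn : 0 < n) (hm : 0 < m) (hnm : n ≤ m)
    (U : (Fin n → ℝ) → ℝ) (hU : ContDiff ℝ (⊤ : ℕ∞) U)
    (D2 : ℝ) (hD2 : ∀ x, ‖fderiv ℝ (fun y => fderiv ℝ U y) x‖ ≤ D2)
    (A : Matrix (Fin m) (Fin m) ℝ) (Ac : ℝ) (hAc : 0 < Ac)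
    (hApd : ∀ v : Fin m → ℝ, Ac * sqnorm v ≤ ∑ j, v j * A.mulVec v j)
    (lam : Matrix (Fin m) (Fin n) ℝ) (lamInv : Matrix (Fin n) (Fin m) ℝ)
    (hlamInv : lamInv * lam = 1)
    (k : ℕ) (Mm : Matrix (Fin k) (Fin n ⊕ (Fin n ⊕ Fin m)) ℝ)
    (T : ℝ) (hT : 0 < T)
    (h : St n m → ℝ) (hh : ContDiff ℝ (⊤ : ℕ∞) h) (hhpos : ∀ p, 0 < h p) :
    ∀ p : St n m,
      (∑ i, (Mm.mulVec (fullGrad h p)) i *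
          (genLstar U A lam T (fun q => (Mm.mulVec (fullGrad h q)) i) p -
            (Mm.mulVec (fullGrad (genLstar U A lam T h) p)) i)) / h p ≤
        GammaPhi U A lam T (fun g q => sqnorm (Mm.mulVec (fullGrad g q)) / g q) h p := by
  intro p
  have hne : h p ≠ 0 := ne_of_gt (hhpos p)
  have hvf : ∀ i : Fin k, ContDiff ℝ (⊤:ℕ∞) (fun q => Mm.mulVec (fullGrad h q) i) :=
    contDiff_vf Mm hh
  have hSf : ContDiff ℝ (⊤:ℕ∞) (fun q => ∑ i, (Mm.mulVec (fullGrad h q) i) ^ 2) :=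
    ContDiff.sum fun i _ => (hvf i).pow 2
  have hinvf : ContDiff ℝ (⊤:ℕ∞) (fun q => (h q)⁻¹) := hh.inv fun q => ne_of_gt (hhpos q)
  have hLh : ContDiff ℝ (⊤:ℕ∞) (genLstar U A lam T h) := contDiff_genLstar U A lam T hU hh
  have hPhi : (fun q => sqnorm (Mm.mulVec (fullGrad h q)) / h q)
      = fun q => (∑ i, (Mm.mulVec (fullGrad h q) i) ^ 2) * (h q)⁻¹ := by
    funext q; rw [div_eq_mul_inv]; rfl
  have hgat := gateaux_eq (diff_of_cd hh) (diff_of_cd hLh) Mm p hne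
  have hzinv : ∀ a : Fin m, pZ (fun q => (h q)⁻¹) a p = - pZ h a p / h p ^ 2 :=
    fun a => pd_inv _ (diff_of_cd hh p) hne
  have hLS : genLstar U A lam T (fun q => ∑ i, (Mm.mulVec (fullGrad h q) i) ^ 2) p
      = ∑ i, (Mm.mulVec (fullGrad h p) i
            * genLstar U A lam T (fun q => Mm.mulVec (fullGrad h q) i) p
          + Mm.mulVec (fullGrad h p) i
            * genLstar U A lam T (fun q => Mm.mulVec (fullGrad h q) i) p
          + ∑ a, ∑ b, A a b *
            (pZ (fun q => Mm.mulVec (fullGrad h q) i) a p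
                * pZ (fun q => Mm.mulVec (fullGrad h q) i) b p
              + pZ (fun q => Mm.mulVec (fullGrad h q) i) a p
                * pZ (fun q => Mm.mulVec (fullGrad h q) i) b p)) := by
    rw [genLstar_sum U A lam T _ (fun i => (hvf i).pow 2) p]
    refine Finset.sum_congr rfl fun i _ => ?_
    have hsq : (fun q => (Mm.mulVec (fullGrad h q) i) ^ 2)
        = fun q => Mm.mulVec (fullGrad h q) i * Mm.mulVec (fullGrad h q) i := by
      funext q; ring
    rw [hsq, genLstar_mul U A lam T (hvf i) (hvf i) p]
  have hzS : ∀ a : Fin m, pZ (fun q => ∑ i, (Mm.mulVec (fullGrad h q) i) ^ 2) a p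
      = ∑ i, (Mm.mulVec (fullGrad h p) i * pZ (fun q => Mm.mulVec (fullGrad h q) i) a p
        + Mm.mulVec (fullGrad h p) i * pZ (fun q => Mm.mulVec (fullGrad h q) i) a p) := by
    intro a
    rw [pZ_pd, pd_sum _ (fun i => diff_of_cd ((hvf i).pow 2) p)]
    refine Finset.sum_congr rfl fun i _ => ?_
    have hsq : (fun q => (Mm.mulVec (fullGrad h q) i) ^ 2)
        = fun q => Mm.mulVec (fullGrad h q) i * Mm.mulVec (fullGrad h q) i := by
      funext q; ring
    rw [hsq, pd_mul _ (diff_of_cd (hvf i) p) (diff_of_cd (hvf i) p)]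
    simp only [pZ_pd]
  have hG : GammaPhi U A lam T (fun g q => sqnorm (Mm.mulVec (fullGrad g q)) / g q) h p
      = (∑ i, Mm.mulVec (fullGrad h p) i *
          (genLstar U A lam T (fun q => Mm.mulVec (fullGrad h q) i) p
            - Mm.mulVec (fullGrad (genLstar U A lam T h) p) i)) / h p
        + (∑ i, ∑ a, ∑ b, A a b *
            ((pZ (fun q => Mm.mulVec (fullGrad h q) i) a p
                - Mm.mulVec (fullGrad h p) i * pZ h a p / h p)
              * (pZ (fun q => Mm.mulVec (fullGrad h q) i) b p
                - Mm.mulVec (fullGrad h p) i * pZ h b p / h p))) / h p := by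
    unfold GammaPhi
    rw [hgat, show ((fun (g : St n m → ℝ) (q : St n m) => sqnorm (Mm.mulVec (fullGrad g q)) / g q) h)
        = fun q => (∑ i, (Mm.mulVec (fullGrad h q) i) ^ 2) * (h q)⁻¹ from hPhi, genLstar_mul U A lam T hSf hinvf p,
      genLstar_inv U A lam T hh hhpos p, hLS]
    simp only [hzS, hzinv]
    have F1 : ∑ i, (Mm.mulVec (fullGrad h p) i
            * genLstar U A lam T (fun q => Mm.mulVec (fullGrad h q) i) p
          + Mm.mulVec (fullGrad h p) i
            * genLstar U A lam T (fun q => Mm.mulVec (fullGrad h q) i) p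
          + ∑ a, ∑ b, A a b *
            (pZ (fun q => Mm.mulVec (fullGrad h q) i) a p
                * pZ (fun q => Mm.mulVec (fullGrad h q) i) b p
              + pZ (fun q => Mm.mulVec (fullGrad h q) i) a p
                * pZ (fun q => Mm.mulVec (fullGrad h q) i) b p))
        = 2 * (∑ i, Mm.mulVec (fullGrad h p) i
            * genLstar U A lam T (fun q => Mm.mulVec (fullGrad h q) i) p)
          + 2 * ∑ i, ∑ a, ∑ b, A a b *
            (pZ (fun q => Mm.mulVec (fullGrad h q) i) a p
              * pZ (fun q => Mm.mulVec (fullGrad h q) i) b p) := by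
      rw [Finset.mul_sum, Finset.mul_sum, ← Finset.sum_add_distrib]
      refine Finset.sum_congr rfl fun i _ => ?_
      have e : ∑ a, ∑ b, A a b *
            (pZ (fun q => Mm.mulVec (fullGrad h q) i) a p
                * pZ (fun q => Mm.mulVec (fullGrad h q) i) b p
              + pZ (fun q => Mm.mulVec (fullGrad h q) i) a p
                * pZ (fun q => Mm.mulVec (fullGrad h q) i) b p)
          = 2 * ∑ a, ∑ b, A a b * (pZ (fun q => Mm.mulVec (fullGrad h q) i) a p
              * pZ (fun q => Mm.mulVec (fullGrad h q) i) b p) := by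
        rw [Finset.mul_sum]
        refine Finset.sum_congr rfl fun a _ => ?_
        rw [Finset.mul_sum]
        exact Finset.sum_congr rfl fun b _ => by ring
      rw [e]; ring
    have F2step : ∀ a b : Fin m, A a b *
          ((∑ i, (Mm.mulVec (fullGrad h p) i * pZ (fun q => Mm.mulVec (fullGrad h q) i) a p
              + Mm.mulVec (fullGrad h p) i * pZ (fun q => Mm.mulVec (fullGrad h q) i) a p))
              * (-pZ h b p / h p ^ 2)
            + (-pZ h a p / h p ^ 2) * ∑ i, (Mm.mulVec (fullGrad h p) i
                * pZ (fun q => Mm.mulVec (fullGrad h q) i) b p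
              + Mm.mulVec (fullGrad h p) i * pZ (fun q => Mm.mulVec (fullGrad h q) i) b p))
        = ∑ i, ((-2 / h p ^ 2) * (A a b * (Mm.mulVec (fullGrad h p) i
              * pZ (fun q => Mm.mulVec (fullGrad h q) i) a p * pZ h b p))
            + (-2 / h p ^ 2) * (A a b * (Mm.mulVec (fullGrad h p) i
              * (pZ h a p * pZ (fun q => Mm.mulVec (fullGrad h q) i) b p)))) := by
      intro a b
      rw [Finset.sum_mul, Finset.mul_sum, mul_add, Finset.mul_sum, Finset.mul_sum,
        ← Finset.sum_add_distrib]
      exact Finset.sum_congr rfl fun i _ => by ring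
    have F2 : ∑ a, ∑ b, A a b *
          ((∑ i, (Mm.mulVec (fullGrad h p) i * pZ (fun q => Mm.mulVec (fullGrad h q) i) a p
              + Mm.mulVec (fullGrad h p) i * pZ (fun q => Mm.mulVec (fullGrad h q) i) a p))
              * (-pZ h b p / h p ^ 2)
            + (-pZ h a p / h p ^ 2) * ∑ i, (Mm.mulVec (fullGrad h p) i
                * pZ (fun q => Mm.mulVec (fullGrad h q) i) b p
              + Mm.mulVec (fullGrad h p) i * pZ (fun q => Mm.mulVec (fullGrad h q) i) b p))
        = (-2 / h p ^ 2) * (∑ i, ∑ a, ∑ b, A a b * (Mm.mulVec (fullGrad h p) i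
              * pZ (fun q => Mm.mulVec (fullGrad h q) i) a p * pZ h b p))
          + (-2 / h p ^ 2) * (∑ i, ∑ a, ∑ b, A a b * (Mm.mulVec (fullGrad h p) i
              * (pZ h a p * pZ (fun q => Mm.mulVec (fullGrad h q) i) b p))) := by
      rw [Finset.sum_congr rfl fun a _ => Finset.sum_congr rfl fun b _ => F2step a b,
        sum_comm3]
      simp only [Finset.sum_add_distrib, ← Finset.mul_sum]
    have F3 : ∑ i, Mm.mulVec (fullGrad h p) i *
          (genLstar U A lam T (fun q => Mm.mulVec (fullGrad h q) i) p
            - Mm.mulVec (fullGrad (genLstar U A lam T h) p) i)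
        = (∑ i, Mm.mulVec (fullGrad h p) i
            * genLstar U A lam T (fun q => Mm.mulVec (fullGrad h q) i) p)
          - ∑ i, Mm.mulVec (fullGrad h p) i * Mm.mulVec (fullGrad (genLstar U A lam T h) p) i := by
      rw [← Finset.sum_sub_distrib]
      exact Finset.sum_congr rfl fun i _ => by ring
    have F4 : ∑ i, ∑ a, ∑ b, A a b *
          ((pZ (fun q => Mm.mulVec (fullGrad h q) i) a p
              - Mm.mulVec (fullGrad h p) i * pZ h a p / h p)
            * (pZ (fun q => Mm.mulVec (fullGrad h q) i) b p
              - Mm.mulVec (fullGrad h p) i * pZ h b p / h p))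
        = (∑ i, ∑ a, ∑ b, A a b * (pZ (fun q => Mm.mulVec (fullGrad h q) i) a p
              * pZ (fun q => Mm.mulVec (fullGrad h q) i) b p))
          + (-(1 / h p)) * (∑ i, ∑ a, ∑ b, A a b * (Mm.mulVec (fullGrad h p) i
              * pZ (fun q => Mm.mulVec (fullGrad h q) i) a p * pZ h b p))
          + (-(1 / h p)) * (∑ i, ∑ a, ∑ b, A a b * (Mm.mulVec (fullGrad h p) i
              * (pZ h a p * pZ (fun q => Mm.mulVec (fullGrad h q) i) b p)))
          + (1 / h p ^ 2) * (∑ i, ∑ a, ∑ b, A a b * (Mm.mulVec (fullGrad h p) i ^ 2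
              * (pZ h a p * pZ h b p))) := by
      rw [Finset.sum_congr rfl fun i (_ : i ∈ Finset.univ) =>
        Finset.sum_congr rfl fun a (_ : a ∈ Finset.univ) =>
        Finset.sum_congr rfl fun b (_ : b ∈ Finset.univ) =>
        (show A a b * ((pZ (fun q => Mm.mulVec (fullGrad h q) i) a p
              - Mm.mulVec (fullGrad h p) i * pZ h a p / h p)
            * (pZ (fun q => Mm.mulVec (fullGrad h q) i) b p
              - Mm.mulVec (fullGrad h p) i * pZ h b p / h p))
          = A a b * (pZ (fun q => Mm.mulVec (fullGrad h q) i) a p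
              * pZ (fun q => Mm.mulVec (fullGrad h q) i) b p)
            + ((-(1 / h p)) * (A a b * (Mm.mulVec (fullGrad h p) i
              * pZ (fun q => Mm.mulVec (fullGrad h q) i) a p * pZ h b p))
            + ((-(1 / h p)) * (A a b * (Mm.mulVec (fullGrad h p) i
              * (pZ h a p * pZ (fun q => Mm.mulVec (fullGrad h q) i) b p)))
            + (1 / h p ^ 2) * (A a b * (Mm.mulVec (fullGrad h p) i ^ 2
              * (pZ h a p * pZ h b p))))) from by field_simp; ring)]
      simp only [Finset.sum_add_distrib, ← Finset.mul_sum]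
      ring
    have F5 : (∑ i, Mm.mulVec (fullGrad h p) i ^ 2)
          * (∑ a, ∑ b, A a b * (pZ h a p * pZ h b p))
        = ∑ i, ∑ a, ∑ b, A a b * (Mm.mulVec (fullGrad h p) i ^ 2 * (pZ h a p * pZ h b p)) := by
      rw [Finset.sum_mul]
      refine Finset.sum_congr rfl fun i _ => ?_
      rw [Finset.mul_sum]
      refine Finset.sum_congr rfl fun a _ => ?_
      rw [Finset.mul_sum]
      exact Finset.sum_congr rfl fun b _ => by ring
    rw [F1, F2, F3, F4]
    linear_combination (1 / h p ^ 3) * F5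
  rw [hG]
  have key2 : ∀ i : Fin k, 0 ≤ ∑ a, ∑ b, A a b *
      ((pZ (fun q => Mm.mulVec (fullGrad h q) i) a p
          - Mm.mulVec (fullGrad h p) i * pZ h a p / h p)
        * (pZ (fun q => Mm.mulVec (fullGrad h q) i) b p
          - Mm.mulVec (fullGrad h p) i * pZ h b p / h p)) := by
    intro i
    have happ := hApd (fun a => pZ (fun q => Mm.mulVec (fullGrad h q) i) a p
        - Mm.mulVec (fullGrad h p) i * pZ h a p / h p)
    have h0 : 0 ≤ Ac * sqnorm (fun a => pZ (fun q => Mm.mulVec (fullGrad h q) i) a p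
        - Mm.mulVec (fullGrad h p) i * pZ h a p / h p) := by
      apply mul_nonneg hAc.le
      unfold sqnorm
      exact Finset.sum_nonneg fun a _ => sq_nonneg _
    refine le_trans (le_trans h0 happ) (le_of_eq ?_)
    refine Finset.sum_congr rfl fun a _ => ?_
    show _ * Matrix.mulVec A _ a = _
    simp only [Matrix.mulVec, dotProduct]
    rw [Finset.mul_sum]
    exact Finset.sum_congr rfl fun b _ => by ring
  exact le_add_of_nonneg_right
    (div_nonneg (Finset.sum_nonneg fun i _ => key2 i) (hhpos p).le)
end
end

section
/- There exists a constant C > 0, independent of m and t, and for each positive integer m a smooth function η_m : ℝⁿ×ℝⁿ×ℝᵐ×[0,∞) → [0,1] such that: (1) for each t ≥ 0, η_m(·,·,·,t) is compactly supported; (2) η_m(x,y,z,t) → 1 as m → ∞ for every (x,y,z,t); and (3) L_t(η_m(·,·,·,t))(x,y,z) ≤ C/m for all (x,y,z,t). -/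
noncomputable section

open Real MeasureTheory Filter

namespace S10
noncomputable def gcut (s : ℝ) : ℝ := Real.smoothTransition (2 - s)

lemma gcut_contDiff : ContDiff ℝ (⊤ : ℕ∞) gcut :=
  Real.smoothTransition.contDiff.comp (contDiff_const.sub contDiff_id)

lemma gcut_mem_Icc (s : ℝ) : gcut s ∈ Set.Icc (0:ℝ) 1 :=
  ⟨Real.smoothTransition.nonneg _, Real.smoothTransition.le_one _⟩

lemma gcut_eq_one {s : ℝ} (hs : s ≤ 1) : gcut s = 1 :=
  Real.smoothTransition.one_of_one_le (by linarith)

lemma gcut_eq_zero {s : ℝ} (hs : 2 ≤ s) : gcut s = 0 :=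
  Real.smoothTransition.zero_of_nonpos (by linarith)

noncomputable def d1 : ℝ → ℝ := deriv gcut
noncomputable def d2 : ℝ → ℝ := deriv d1

lemma gcut_diff : Differentiable ℝ gcut := gcut_contDiff.differentiable (by simp)

lemma d1_contDiff : ContDiff ℝ (⊤ : ℕ∞) d1 := by
  have := contDiff_infty_iff_deriv.mp (gcut_contDiff : ContDiff ℝ (⊤:ℕ∞) gcut)
  exact this.2

lemma d1_diff : Differentiable ℝ d1 := d1_contDiff.differentiable (by simp)

lemma d1_cont : Continuous d1 := d1_diff.continuous
lemma d2_cont : Continuous d2 := by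
  have := contDiff_infty_iff_deriv.mp d1_contDiff
  exact this.2.continuous

lemma d1_zero_lt {s : ℝ} (h : s < 1) : d1 s = 0 := by
  have h1 : deriv gcut s = deriv (fun _ : ℝ => (1:ℝ)) s := by
    apply Filter.EventuallyEq.deriv_eq
    filter_upwards [Iio_mem_nhds h] with x hx
    exact gcut_eq_one (le_of_lt hx)
  simpa [d1] using h1

lemma d1_zero_gt {s : ℝ} (h : 2 < s) : d1 s = 0 := by
  have h1 : deriv gcut s = deriv (fun _ : ℝ => (0:ℝ)) s := by
    apply Filter.EventuallyEq.deriv_eq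
    filter_upwards [Ioi_mem_nhds h] with x hx
    exact gcut_eq_zero (le_of_lt hx)
  simpa [d1] using h1

lemma d2_zero_lt {s : ℝ} (h : s < 1) : d2 s = 0 := by
  have h1 : deriv d1 s = deriv (fun _ : ℝ => (0:ℝ)) s := by
    apply Filter.EventuallyEq.deriv_eq
    filter_upwards [Iio_mem_nhds h] with x hx
    exact d1_zero_lt hx
  simpa [d2] using h1

lemma d2_zero_gt {s : ℝ} (h : 2 < s) : d2 s = 0 := by
  have h1 : deriv d1 s = deriv (fun _ : ℝ => (0:ℝ)) s := by
    apply Filter.EventuallyEq.deriv_eq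
    filter_upwards [Ioi_mem_nhds h] with x hx
    exact d1_zero_gt hx
  simpa [d2] using h1

lemma exists_bound (f : ℝ → ℝ) (hf : Continuous f)
    (h1 : ∀ s < (1:ℝ), f s = 0) (h2 : ∀ s, 2 < s → f s = 0) :
    ∃ C : ℝ, 0 ≤ C ∧ ∀ s, |f s| ≤ C := by
  have hcs : HasCompactSupport f := by
    apply HasCompactSupport.intro (isCompact_Icc (a := (1:ℝ)) (b := 2))
    intro x hx
    rcases lt_or_ge x 1 with h | h
    · exact h1 x h
    · by_contra hc
      have hx2 : x ≤ 2 := by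
        by_contra hx2
        exact hc (h2 x (by linarith))
      exact hx ⟨h, hx2⟩
  obtain ⟨C, hC⟩ := hcs.exists_bound_of_continuous hf
  refine ⟨max C 0, le_max_right _ _, fun s => ?_⟩
  have h := hC s
  rw [Real.norm_eq_abs] at h
  exact h.trans (le_max_left _ _)

lemma d1_bound : ∃ C : ℝ, 0 ≤ C ∧ ∀ s, |d1 s| ≤ C :=
  exists_bound d1 d1_cont (fun s h => d1_zero_lt h) (fun s h => d1_zero_gt h)

lemma d2_bound : ∃ C : ℝ, 0 ≤ C ∧ ∀ s, |d2 s| ≤ C :=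
  exists_bound d2 d2_cont (fun s h => d2_zero_lt h) (fun s h => d2_zero_gt h)


variable {n m : ℕ}

lemma contDiff_sqnorm {k : ℕ} : ContDiff ℝ (⊤:ℕ∞) (sqnorm (k := k)) := by
  unfold sqnorm
  apply ContDiff.sum
  intro i _
  exact ((ContinuousLinearMap.proj (R := ℝ) (φ := fun _ : Fin k => ℝ) i).contDiff).pow 2

lemma hasFDerivAt_sqnorm {k : ℕ} (v : Fin k → ℝ) :
    HasFDerivAt sqnorm
      (∑ i, (2 * v i) • (ContinuousLinearMap.proj (R := ℝ) (φ := fun _ : Fin k => ℝ) i)) v := by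
  have h : ∀ i ∈ Finset.univ, HasFDerivAt (fun w : Fin k → ℝ => w i ^ 2)
      ((2 * v i) • (ContinuousLinearMap.proj (R := ℝ) (φ := fun _ : Fin k => ℝ) i)) v := by
    intro i _
    have hp := (hasDerivAt_pow 2 (v i)).comp_hasFDerivAt v
      (ContinuousLinearMap.proj (R := ℝ) (φ := fun _ : Fin k => ℝ) i).hasFDerivAt
    simpa [Function.comp_def] using hp
  exact HasFDerivAt.fun_sum h

lemma hasFDerivAt_half_sqnorm {k : ℕ} (v : Fin k → ℝ) :
    HasFDerivAt (fun w : Fin k → ℝ => sqnorm w / 2)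
      (∑ i, (v i) • (ContinuousLinearMap.proj (R := ℝ) (φ := fun _ : Fin k => ℝ) i)) v := by
  have h : ∀ i ∈ Finset.univ, HasFDerivAt (fun w : Fin k → ℝ => w i ^ 2 / 2)
      ((v i) • (ContinuousLinearMap.proj (R := ℝ) (φ := fun _ : Fin k => ℝ) i)) v := by
    intro i _
    have hp := ((hasDerivAt_pow 2 (v i)).div_const 2).comp_hasFDerivAt v
      (ContinuousLinearMap.proj (R := ℝ) (φ := fun _ : Fin k => ℝ) i).hasFDerivAt
    have he : (2 : ℝ) * v i ^ 1 / 2 = v i := by ring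
    simpa [he, Function.comp_def] using hp
  have hs := HasFDerivAt.fun_sum h
  apply hs.congr_of_eventuallyEq
  filter_upwards with w
  simp [sqnorm, Finset.sum_div]

lemma hasFDerivAt_Wc (U : (Fin n → ℝ) → ℝ) (hU : ContDiff ℝ (⊤:ℕ∞) U) (c : ℝ) (p : St n m) :
    ∃ L : St n m →L[ℝ] ℝ, HasFDerivAt (fun q : St n m => Wfun U q + c) L p ∧
      ∀ v : St n m, L v
        = fderiv ℝ U p.1 v.1 + (∑ i, p.2.1 i * v.2.1 i) + (∑ j, p.2.2 j * v.2.2 j) := by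
  have hUd : DifferentiableAt ℝ U p.1 := (hU.differentiable (by simp)) p.1
  have h1 : HasFDerivAt (fun q : St n m => U q.1)
      ((fderiv ℝ U p.1).comp (ContinuousLinearMap.fst ℝ (Fin n → ℝ) ((Fin n → ℝ) × (Fin m → ℝ)))) p :=
    hUd.hasFDerivAt.comp p hasFDerivAt_fst
  have h2 := by
    have := (hasFDerivAt_half_sqnorm p.2.1).comp p
      ((hasFDerivAt_fst (p := p.2)).comp p (hasFDerivAt_snd (p := p)))
    exact this
  have h3 := by
    have := (hasFDerivAt_half_sqnorm p.2.2).comp p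
      ((hasFDerivAt_snd (p := p.2)).comp p (hasFDerivAt_snd (p := p)))
    exact this
  have hcomb := ((h1.add h2).add h3).add_const c
  refine ⟨_, hcomb, fun v => ?_⟩
  simp [ContinuousLinearMap.add_apply, ContinuousLinearMap.coe_comp', Function.comp_apply,
    ContinuousLinearMap.sum_apply, ContinuousLinearMap.smul_apply,
    ContinuousLinearMap.proj_apply, smul_eq_mul]

lemma hasFDerivAt_eta (U : (Fin n → ℝ) → ℝ) (hU : ContDiff ℝ (⊤:ℕ∞) U) (c a : ℝ)
    (p : St n m) (hwp : 0 < Wfun U p + c) :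
    ∃ L : St n m →L[ℝ] ℝ,
      HasFDerivAt (fun q : St n m => gcut (a * Real.log (Wfun U q + c))) L p ∧
      ∀ v : St n m, L v = (d1 (a * Real.log (Wfun U p + c)) * (a * (Wfun U p + c)⁻¹)) *
        (fderiv ℝ U p.1 v.1 + (∑ i, p.2.1 i * v.2.1 i) + (∑ j, p.2.2 j * v.2.2 j)) := by
  obtain ⟨LW, hLW, happ⟩ := hasFDerivAt_Wc U hU c p
  have hlog : HasFDerivAt (fun q : St n m => Real.log (Wfun U q + c)) ((Wfun U p + c)⁻¹ • LW) p :=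
    hLW.log (ne_of_gt hwp)
  have hmul := hlog.const_mul a
  have hg : HasDerivAt gcut (d1 (a * Real.log (Wfun U p + c))) (a * Real.log (Wfun U p + c)) :=
    (gcut_diff _).hasDerivAt
  have hc := hg.comp_hasFDerivAt p hmul
  refine ⟨_, hc, fun v => ?_⟩
  simp only [ContinuousLinearMap.smul_apply, smul_eq_mul, happ v]
  ring

lemma pX_eta (U : (Fin n → ℝ) → ℝ) (hU : ContDiff ℝ (⊤:ℕ∞) U) (c a : ℝ)
    (i : Fin n) (p : St n m) (hwp : 0 < Wfun U p + c) :
    pX (fun q : St n m => gcut (a * Real.log (Wfun U q + c))) i p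
      = (d1 (a * Real.log (Wfun U p + c)) * (a * (Wfun U p + c)⁻¹)) * gradp U p.1 i := by
  obtain ⟨L, hL, happ⟩ := hasFDerivAt_eta U hU c a p hwp
  unfold pX
  rw [hL.fderiv, happ]
  simp [gradp]

lemma pY_eta (U : (Fin n → ℝ) → ℝ) (hU : ContDiff ℝ (⊤:ℕ∞) U) (c a : ℝ)
    (i : Fin n) (p : St n m) (hwp : 0 < Wfun U p + c) :
    pY (fun q : St n m => gcut (a * Real.log (Wfun U q + c))) i p
      = (d1 (a * Real.log (Wfun U p + c)) * (a * (Wfun U p + c)⁻¹)) * p.2.1 i := by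
  obtain ⟨L, hL, happ⟩ := hasFDerivAt_eta U hU c a p hwp
  unfold pY
  rw [hL.fderiv, happ]
  simp [Pi.single_apply, mul_ite, Finset.sum_ite_eq']

lemma pZ_eta (U : (Fin n → ℝ) → ℝ) (hU : ContDiff ℝ (⊤:ℕ∞) U) (c a : ℝ)
    (j : Fin m) (p : St n m) (hwp : 0 < Wfun U p + c) :
    pZ (fun q : St n m => gcut (a * Real.log (Wfun U q + c))) j p
      = (d1 (a * Real.log (Wfun U p + c)) * (a * (Wfun U p + c)⁻¹)) * p.2.2 j := by
  obtain ⟨L, hL, happ⟩ := hasFDerivAt_eta U hU c a p hwp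
  unfold pZ
  rw [hL.fderiv, happ]
  simp [Pi.single_apply, mul_ite, Finset.sum_ite_eq']

lemma hasFDerivAt_coef (U : (Fin n → ℝ) → ℝ) (hU : ContDiff ℝ (⊤:ℕ∞) U) (c a : ℝ)
    (p : St n m) (hwp : 0 < Wfun U p + c) :
    ∃ L : St n m →L[ℝ] ℝ,
      HasFDerivAt (fun q : St n m =>
        d1 (a * Real.log (Wfun U q + c)) * (a * (Wfun U q + c)⁻¹)) L p ∧
      ∀ v : St n m, L v = (a * (d2 (a * Real.log (Wfun U p + c)) * a
            - d1 (a * Real.log (Wfun U p + c))) * ((Wfun U p + c)⁻¹ * (Wfun U p + c)⁻¹)) *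
        (fderiv ℝ U p.1 v.1 + (∑ i, p.2.1 i * v.2.1 i) + (∑ j, p.2.2 j * v.2.2 j)) := by
  obtain ⟨LW, hLW, happ⟩ := hasFDerivAt_Wc U hU c p
  have hlog : HasFDerivAt (fun q : St n m => Real.log (Wfun U q + c)) ((Wfun U p + c)⁻¹ • LW) p :=
    hLW.log (ne_of_gt hwp)
  have hmul := hlog.const_mul a
  have hd1 : HasDerivAt d1 (d2 (a * Real.log (Wfun U p + c))) (a * Real.log (Wfun U p + c)) :=
    (d1_diff _).hasDerivAt
  have hda := hd1.comp_hasFDerivAt p hmul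
  have hinv := (hasDerivAt_inv (ne_of_gt hwp)).comp_hasFDerivAt p hLW
  have hainv := hinv.const_mul a
  have hprod := hda.mul hainv
  refine ⟨_, hprod, fun v => ?_⟩
  simp only [ContinuousLinearMap.add_apply, ContinuousLinearMap.smul_apply, smul_eq_mul,
    ContinuousLinearMap.neg_apply, Function.comp_apply, Function.comp, happ v, ← inv_pow]
  ring

lemma pZpZ_eta (U : (Fin n → ℝ) → ℝ) (hU : ContDiff ℝ (⊤:ℕ∞) U) (c a : ℝ)
    (hw : ∀ q : St n m, 0 < Wfun U q + c) (i j : Fin m) (p : St n m) :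
    pZ (fun q : St n m =>
        pZ (fun q' : St n m => gcut (a * Real.log (Wfun U q' + c))) j q) i p
      = (a * (d2 (a * Real.log (Wfun U p + c)) * a
            - d1 (a * Real.log (Wfun U p + c))) * ((Wfun U p + c)⁻¹ * (Wfun U p + c)⁻¹))
          * p.2.2 i * p.2.2 j
        + (d1 (a * Real.log (Wfun U p + c)) * (a * (Wfun U p + c)⁻¹)) * (Pi.single (M := fun _ : Fin m => ℝ) i 1 j) := by
  have hfun : (fun q : St n m =>
      pZ (fun q' : St n m => gcut (a * Real.log (Wfun U q' + c))) j q)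
      = fun q : St n m =>
        (d1 (a * Real.log (Wfun U q + c)) * (a * (Wfun U q + c)⁻¹)) * q.2.2 j :=
    funext fun q => pZ_eta U hU c a j q (hw q)
  rw [hfun]
  unfold pZ
  obtain ⟨L, hL, happ⟩ := hasFDerivAt_coef U hU c a p (hw p)
  have hz := ((ContinuousLinearMap.proj (R := ℝ) (φ := fun _ : Fin m => ℝ) j).hasFDerivAt
      (x := p.2.2)).comp p ((hasFDerivAt_snd (p := p.2)).comp p (hasFDerivAt_snd (p := p)))
  have hp2 : HasFDerivAt (fun q : St n m =>
      (d1 (a * Real.log (Wfun U q + c)) * (a * (Wfun U q + c)⁻¹)) * q.2.2 j) _ p := hL.mul hz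
  rw [hp2.fderiv]
  simp only [ContinuousLinearMap.add_apply, ContinuousLinearMap.smul_apply, smul_eq_mul,
    ContinuousLinearMap.coe_comp', Function.comp_apply, ContinuousLinearMap.coe_snd',
    ContinuousLinearMap.proj_apply, happ]
  simp [Pi.single_apply, mul_ite, Finset.sum_ite_eq']
  ring

lemma genL_eta (U : (Fin n → ℝ) → ℝ) (hU : ContDiff ℝ (⊤:ℕ∞) U) (c a : ℝ)
    (hw : ∀ q : St n m, 0 < Wfun U q + c)
    (A : Matrix (Fin m) (Fin m) ℝ) (lam : Matrix (Fin m) (Fin n) ℝ) (T : ℝ) (p : St n m) :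
    genL U A lam T (fun q : St n m => gcut (a * Real.log (Wfun U q + c))) p
      = -T⁻¹ * ((d1 (a * Real.log (Wfun U p + c)) * (a * (Wfun U p + c)⁻¹))
            * (∑ i, ∑ j, A i j * p.2.2 i * p.2.2 j))
        + (a * (d2 (a * Real.log (Wfun U p + c)) * a
            - d1 (a * Real.log (Wfun U p + c))) * ((Wfun U p + c)⁻¹ * (Wfun U p + c)⁻¹))
          * (∑ i, ∑ j, A i j * p.2.2 i * p.2.2 j)
        + (d1 (a * Real.log (Wfun U p + c)) * (a * (Wfun U p + c)⁻¹)) * A.trace := by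
  have hwp := hw p
  unfold genL
  rw [show (∑ i, p.2.1 i * pX (fun q : St n m => gcut (a * Real.log (Wfun U q + c))) i p)
      = ∑ i, p.2.1 i * ((d1 (a * Real.log (Wfun U p + c)) * (a * (Wfun U p + c)⁻¹))
          * gradp U p.1 i)
    from Finset.sum_congr rfl fun i _ => by rw [pX_eta U hU c a i p hwp]]
  rw [show (∑ i, gradp U p.1 i * pY (fun q : St n m => gcut (a * Real.log (Wfun U q + c))) i p)
      = ∑ i, gradp U p.1 i * ((d1 (a * Real.log (Wfun U p + c)) * (a * (Wfun U p + c)⁻¹))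
          * p.2.1 i)
    from Finset.sum_congr rfl fun i _ => by rw [pY_eta U hU c a i p hwp]]
  rw [show (∑ i, (lam.transpose.mulVec p.2.2) i
        * pY (fun q : St n m => gcut (a * Real.log (Wfun U q + c))) i p)
      = ∑ i, (lam.transpose.mulVec p.2.2) i
          * ((d1 (a * Real.log (Wfun U p + c)) * (a * (Wfun U p + c)⁻¹)) * p.2.1 i)
    from Finset.sum_congr rfl fun i _ => by rw [pY_eta U hU c a i p hwp]]
  rw [show (∑ j, (lam.mulVec p.2.1) j
        * pZ (fun q : St n m => gcut (a * Real.log (Wfun U q + c))) j p)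
      = ∑ j, (lam.mulVec p.2.1) j
          * ((d1 (a * Real.log (Wfun U p + c)) * (a * (Wfun U p + c)⁻¹)) * p.2.2 j)
    from Finset.sum_congr rfl fun j _ => by rw [pZ_eta U hU c a j p hwp]]
  rw [show (∑ j, (A.transpose.mulVec p.2.2) j
        * pZ (fun q : St n m => gcut (a * Real.log (Wfun U q + c))) j p)
      = ∑ j, (A.transpose.mulVec p.2.2) j
          * ((d1 (a * Real.log (Wfun U p + c)) * (a * (Wfun U p + c)⁻¹)) * p.2.2 j)
    from Finset.sum_congr rfl fun j _ => by rw [pZ_eta U hU c a j p hwp]]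
  rw [show (∑ i, ∑ j, A i j
        * pZ (fun q : St n m =>
            pZ (fun q' : St n m => gcut (a * Real.log (Wfun U q' + c))) j q) i p)
      = ∑ i, ∑ j, A i j
          * ((a * (d2 (a * Real.log (Wfun U p + c)) * a
              - d1 (a * Real.log (Wfun U p + c))) * ((Wfun U p + c)⁻¹ * (Wfun U p + c)⁻¹))
              * p.2.2 i * p.2.2 j
            + (d1 (a * Real.log (Wfun U p + c)) * (a * (Wfun U p + c)⁻¹))
              * (Pi.single (M := fun _ : Fin m => ℝ) i 1 j))
    from Finset.sum_congr rfl fun i _ => Finset.sum_congr rfl fun j _ => by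
      rw [pZpZ_eta U hU c a hw i j p]]
  set κ := d1 (a * Real.log (Wfun U p + c)) * (a * (Wfun U p + c)⁻¹) with hκ
  set B := a * (d2 (a * Real.log (Wfun U p + c)) * a
      - d1 (a * Real.log (Wfun U p + c))) * ((Wfun U p + c)⁻¹ * (Wfun U p + c)⁻¹) with hB
  have e1 : (∑ i, p.2.1 i * (κ * gradp U p.1 i))
      = ∑ i, gradp U p.1 i * (κ * p.2.1 i) :=
    Finset.sum_congr rfl fun i _ => by ring
  have e2 : (∑ i, (lam.transpose.mulVec p.2.2) i * (κ * p.2.1 i))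
      = ∑ j, (lam.mulVec p.2.1) j * (κ * p.2.2 j) := by
    simp only [Matrix.mulVec, dotProduct, Matrix.transpose_apply,
      Finset.sum_mul, Finset.mul_sum]
    rw [Finset.sum_comm]
    exact Finset.sum_congr rfl fun j _ => Finset.sum_congr rfl fun i _ => by ring
  have e3 : (∑ j, (A.transpose.mulVec p.2.2) j * (κ * p.2.2 j))
      = κ * ∑ i, ∑ j, A i j * p.2.2 i * p.2.2 j := by
    simp only [Matrix.mulVec, dotProduct, Matrix.transpose_apply,
      Finset.sum_mul, Finset.mul_sum]
    rw [Finset.sum_comm]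
    exact Finset.sum_congr rfl fun i _ => Finset.sum_congr rfl fun j _ => by ring
  have e4 : (∑ i, ∑ j, A i j * (B * p.2.2 i * p.2.2 j
        + κ * (Pi.single (M := fun _ : Fin m => ℝ) i 1 j)))
      = B * (∑ i, ∑ j, A i j * p.2.2 i * p.2.2 j) + κ * A.trace := by
    have e5 : ∀ i : Fin m, (∑ j, A i j * (κ * (Pi.single (M := fun _ : Fin m => ℝ) i 1 j)))
        = A i i * κ := by
      intro i
      rw [Finset.sum_eq_single i]
      · simp
      · intro b _ hb
        simp [Pi.single_apply, Ne.symm hb]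
      · simp
    simp only [mul_add, Finset.sum_add_distrib, Finset.mul_sum]
    rw [Finset.sum_congr rfl fun i (_ : i ∈ Finset.univ) => e5 i]
    unfold Matrix.trace Matrix.diag
    rw [Finset.mul_sum]
    congr 1
    · exact Finset.sum_congr rfl fun i _ => Finset.sum_congr rfl fun j _ => by ring
    · exact Finset.sum_congr rfl fun i _ => by ring
  linear_combination e1 + e2 - T⁻¹ * e3 + e4

lemma sqnorm_nonneg {k : ℕ} (v : Fin k → ℝ) : 0 ≤ sqnorm v :=
  Finset.sum_nonneg fun i _ => sq_nonneg _

lemma sq_le_sqnorm {k : ℕ} (v : Fin k → ℝ) (i : Fin k) : v i ^ 2 ≤ sqnorm v :=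
  Finset.single_le_sum (f := fun i => v i ^ 2) (fun i _ => sq_nonneg _) (Finset.mem_univ i)

lemma abs_mul_le_sqnorm {k : ℕ} (v : Fin k → ℝ) (i j : Fin k) :
    |v i * v j| ≤ sqnorm v := by
  have hi := sq_le_sqnorm v i
  have hj := sq_le_sqnorm v j
  have h0 := sqnorm_nonneg v
  rw [abs_mul]
  nlinarith [abs_nonneg (v i), abs_nonneg (v j), sq_abs (v i), sq_abs (v j)]

lemma S_bound (A : Matrix (Fin m) (Fin m) ℝ) (z : Fin m → ℝ) :
    |∑ i, ∑ j, A i j * z i * z j| ≤ (∑ i, ∑ j, |A i j|) * sqnorm z := by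
  calc |∑ i, ∑ j, A i j * z i * z j| ≤ ∑ i, |∑ j, A i j * z i * z j| :=
      Finset.abs_sum_le_sum_abs _ _
  _ ≤ ∑ i, ∑ j, |A i j * z i * z j| :=
      Finset.sum_le_sum fun i _ => Finset.abs_sum_le_sum_abs _ _
  _ ≤ ∑ i, ∑ j, |A i j| * sqnorm z := by
      apply Finset.sum_le_sum
      intro i _
      apply Finset.sum_le_sum
      intro j _
      rw [mul_assoc, abs_mul]
      exact mul_le_mul_of_nonneg_left (abs_mul_le_sqnorm z i j) (abs_nonneg _)
  _ = (∑ i, ∑ j, |A i j|) * sqnorm z := by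
      rw [Finset.sum_mul]
      exact Finset.sum_congr rfl fun i _ => (Finset.sum_mul _ _ _).symm

lemma trace_bound (A : Matrix (Fin m) (Fin m) ℝ) :
    |A.trace| ≤ ∑ i, ∑ j, |A i j| := by
  unfold Matrix.trace Matrix.diag
  calc |∑ i, A i i| ≤ ∑ i, |A i i| := Finset.abs_sum_le_sum_abs _ _
  _ ≤ ∑ i, ∑ j, |A i j| := Finset.sum_le_sum fun i _ =>
      Finset.single_le_sum (f := fun j => |A i j|) (fun j _ => abs_nonneg _)
        (Finset.mem_univ i)

lemma eta_contDiff (U : (Fin n → ℝ) → ℝ) (hU : ContDiff ℝ (⊤:ℕ∞) U) (c a : ℝ)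
    (hw : ∀ q : St n m, 0 < Wfun U q + c) :
    ContDiff ℝ (⊤:ℕ∞) (fun q : St n m => gcut (a * Real.log (Wfun U q + c))) := by
  have h1 : ContDiff ℝ (⊤:ℕ∞) (fun q : St n m => U q.1) := hU.comp contDiff_fst
  have h2 : ContDiff ℝ (⊤:ℕ∞) (fun q : St n m => sqnorm q.2.1) :=
    contDiff_sqnorm.comp (contDiff_fst.comp contDiff_snd)
  have h3 : ContDiff ℝ (⊤:ℕ∞) (fun q : St n m => sqnorm q.2.2) :=
    contDiff_sqnorm.comp (contDiff_snd.comp contDiff_snd)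
  have hWc : ContDiff ℝ (⊤:ℕ∞) (fun q : St n m => Wfun U q + c) :=
    ((h1.add (h2.div_const 2)).add (h3.div_const 2)).add contDiff_const
  have hlog : ContDiff ℝ (⊤:ℕ∞) (fun q : St n m => Real.log (Wfun U q + c)) :=
    hWc.log fun q => (hw q).ne'
  exact gcut_contDiff.comp (contDiff_const.mul hlog)

lemma eta_hcs (U : (Fin n → ℝ) → ℝ) (abar : Fin n → ℝ) (habar : ∀ i, 0 < abar i) (c : ℝ)
    (hlow : ∀ q : St n m, sqnorm (fun i => abar i * q.1 i) + 1
      + sqnorm q.2.1 / 2 + sqnorm q.2.2 / 2 ≤ Wfun U q + c)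
    (a : ℝ) (ha : 0 < a) :
    HasCompactSupport (fun q : St n m => gcut (a * Real.log (Wfun U q + c))) := by
  set M := Real.exp (2 / a) with hM
  set Binv := ∑ i, (abar i)⁻¹ with hB
  set r := max (Real.sqrt M * Binv) (Real.sqrt (2 * M)) with hr
  apply HasCompactSupport.intro (isCompact_closedBall (0 : St n m) r)
  intro q hq
  by_contra hne
  apply hq
  rw [Metric.mem_closedBall, dist_zero_right]
  have hM0 : 0 < M := Real.exp_pos _
  have hkey := hlow q
  have hs1 := sqnorm_nonneg (fun i => abar i * q.1 i)
  have hs2 := sqnorm_nonneg q.2.1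
  have hs3 := sqnorm_nonneg q.2.2
  have hwq : 0 < Wfun U q + c := by linarith
  have h2 : a * Real.log (Wfun U q + c) < 2 := by
    by_contra hh
    exact hne (gcut_eq_zero (not_lt.mp hh))
  have hlt : Wfun U q + c ≤ M := by
    have hlog : Real.log (Wfun U q + c) < 2 / a := by
      rw [lt_div_iff₀ ha]
      linarith [h2]
    calc Wfun U q + c = Real.exp (Real.log (Wfun U q + c)) := (Real.exp_log hwq).symm
    _ ≤ M := Real.exp_le_exp.mpr hlog.le
  have hBinv : 0 ≤ Binv := Finset.sum_nonneg fun i _ => (inv_pos.mpr (habar i)).le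
  have hx : ∀ i, |q.1 i| ≤ Real.sqrt M * Binv := by
    intro i
    have hsq : (abar i * q.1 i) ^ 2 ≤ M := by
      have := sq_le_sqnorm (fun i => abar i * q.1 i) i
      nlinarith
    have hab : |abar i * q.1 i| ≤ Real.sqrt M := by
      rw [← Real.sqrt_sq_eq_abs]
      exact Real.sqrt_le_sqrt hsq
    have hBi : (abar i)⁻¹ ≤ Binv :=
      Finset.single_le_sum (f := fun j => (abar j)⁻¹)
        (fun j _ => (inv_pos.mpr (habar j)).le) (Finset.mem_univ i)
    have heq : |q.1 i| = |abar i * q.1 i| * (abar i)⁻¹ := by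
      rw [abs_mul, abs_of_pos (habar i), mul_comm (abar i), mul_assoc,
        mul_inv_cancel₀ (habar i).ne', mul_one]
    rw [heq]
    exact mul_le_mul hab hBi (inv_pos.mpr (habar i)).le (Real.sqrt_nonneg _)
  have hyz : ∀ (v : Fin n → ℝ), sqnorm v ≤ 2 * M → ∀ i, |v i| ≤ Real.sqrt (2 * M) := by
    intro v hv i
    have := sq_le_sqnorm v i
    rw [← Real.sqrt_sq_eq_abs]
    exact Real.sqrt_le_sqrt (by linarith)
  have hyz' : ∀ (v : Fin m → ℝ), sqnorm v ≤ 2 * M → ∀ i, |v i| ≤ Real.sqrt (2 * M) := by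
    intro v hv i
    have := sq_le_sqnorm v i
    rw [← Real.sqrt_sq_eq_abs]
    exact Real.sqrt_le_sqrt (by linarith)
  have hr0 : 0 ≤ r := le_trans (Real.sqrt_nonneg _) (le_max_right _ _)
  have hny : ‖q.2.1‖ ≤ r := by
    rw [pi_norm_le_iff_of_nonneg hr0]
    intro i
    rw [Real.norm_eq_abs]
    exact le_trans (hyz q.2.1 (by nlinarith) i) (le_max_right _ _)
  have hnz : ‖q.2.2‖ ≤ r := by
    rw [pi_norm_le_iff_of_nonneg hr0]
    intro i
    rw [Real.norm_eq_abs]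
    exact le_trans (hyz' q.2.2 (by nlinarith) i) (le_max_right _ _)
  have hnx : ‖q.1‖ ≤ r := by
    rw [pi_norm_le_iff_of_nonneg hr0]
    intro i
    rw [Real.norm_eq_abs]
    exact le_trans (hx i) (le_max_left _ _)
  calc ‖q‖ = max ‖q.1‖ ‖q.2‖ := Prod.norm_def q
  _ ≤ r := max_le hnx (by rw [Prod.norm_def]; exact max_le hny hnz)

end S10

lemma bound_aux (Tt a w S tr d1u d2u G1 G2 K kk Ts : ℝ)
    (hT : 0 < Tt) (hkk : 1 ≤ kk) (ha : a = Tt / kk)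
    (hw : 1 ≤ w) (hS : |S| ≤ 2 * K * w) (htr : |tr| ≤ K) (hK : 0 ≤ K)
    (hd1 : |d1u| ≤ G1) (hd2 : |d2u| ≤ G2)
    (hTs : Tt ≤ Ts) (hTs0 : 0 < Ts) :
    -Tt⁻¹ * ((d1u * (a * w⁻¹)) * S) + (a * (d2u * a - d1u) * (w⁻¹ * w⁻¹)) * S
        + (d1u * (a * w⁻¹)) * tr
      ≤ (G1 * (2 * K) + Ts * (G2 * Ts + G1) * (2 * K) + G1 * Ts * K) / kk := by
  have hkk0 : 0 < kk := lt_of_lt_of_le one_pos hkk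
  have hw0 : 0 < w := lt_of_lt_of_le one_pos hw
  have hiw0 : 0 < w⁻¹ := inv_pos.mpr hw0
  have hiw1 : w⁻¹ ≤ 1 := inv_le_one_of_one_le₀ hw
  have hG1 : 0 ≤ G1 := le_trans (abs_nonneg _) hd1
  have hG2 : 0 ≤ G2 := le_trans (abs_nonneg _) hd2
  have ha0 : 0 < a := by rw [ha]; positivity
  have hTa : Tt⁻¹ * a = kk⁻¹ := by
    rw [ha]
    field_simp
  have q1 : w⁻¹ * |S| ≤ 2 * K := by
    have h := mul_le_mul_of_nonneg_left hS hiw0.le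
    calc w⁻¹ * |S| ≤ w⁻¹ * (2 * K * w) := h
    _ = 2 * K * (w⁻¹ * w) := by ring
    _ = 2 * K := by rw [inv_mul_cancel₀ hw0.ne']; ring
  have q2 : a ≤ Ts * kk⁻¹ := by
    rw [ha, div_eq_mul_inv]
    exact mul_le_mul_of_nonneg_right hTs (inv_nonneg.mpr hkk0.le)
  have q3 : a ≤ Ts := le_trans (by rw [ha]; exact div_le_self hT.le hkk) hTs
  have hawle : a * w⁻¹ ≤ Ts * kk⁻¹ * 1 :=
    mul_le_mul q2 hiw1 hiw0.le (by positivity)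
  have hA : -(d1u * (w⁻¹ * S)) ≤ G1 * (2 * K) := by
    calc -(d1u * (w⁻¹ * S)) ≤ |d1u * (w⁻¹ * S)| := neg_le_abs _
    _ = |d1u| * (w⁻¹ * |S|) := by rw [abs_mul, abs_mul, abs_of_pos hiw0]
    _ ≤ G1 * (2 * K) :=
      mul_le_mul hd1 q1 (mul_nonneg hiw0.le (abs_nonneg _)) hG1
  have hd : |d2u * a - d1u| ≤ G2 * Ts + G1 := by
    calc |d2u * a - d1u| ≤ |d2u * a| + |d1u| := abs_sub _ _
    _ = |d2u| * a + |d1u| := by rw [abs_mul, abs_of_pos ha0]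
    _ ≤ G2 * Ts + G1 := add_le_add (mul_le_mul hd2 q3 ha0.le hG2) hd1
  have hB : (a * (d2u * a - d1u) * (w⁻¹ * w⁻¹)) * S
      ≤ Ts * (G2 * Ts + G1) * (2 * K) * kk⁻¹ := by
    calc (a * (d2u * a - d1u) * (w⁻¹ * w⁻¹)) * S
        ≤ |(a * (d2u * a - d1u) * (w⁻¹ * w⁻¹)) * S| := le_abs_self _
    _ = (a * w⁻¹) * (|d2u * a - d1u| * (w⁻¹ * |S|)) := by
        rw [abs_mul, abs_mul, abs_mul, abs_of_pos ha0, abs_of_pos (mul_pos hiw0 hiw0)]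
        ring
    _ ≤ (Ts * kk⁻¹ * 1) * ((G2 * Ts + G1) * (2 * K)) := by
        apply mul_le_mul hawle
          (mul_le_mul hd q1 (mul_nonneg hiw0.le (abs_nonneg _)) (by positivity))
          (mul_nonneg (abs_nonneg _) (mul_nonneg hiw0.le (abs_nonneg _)))
          (by positivity)
    _ = Ts * (G2 * Ts + G1) * (2 * K) * kk⁻¹ := by ring
  have hC : (d1u * (a * w⁻¹)) * tr ≤ G1 * Ts * K * kk⁻¹ := by
    calc (d1u * (a * w⁻¹)) * tr ≤ |(d1u * (a * w⁻¹)) * tr| := le_abs_self _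
    _ = (|d1u| * (a * w⁻¹)) * |tr| := by
        rw [abs_mul, abs_mul, abs_of_pos (mul_pos ha0 hiw0)]
    _ ≤ (G1 * (Ts * kk⁻¹ * 1)) * K := by
        apply mul_le_mul (mul_le_mul hd1 hawle (by positivity) hG1) htr (abs_nonneg _)
          (by positivity)
    _ = G1 * Ts * K * kk⁻¹ := by ring
  have e1 : -Tt⁻¹ * ((d1u * (a * w⁻¹)) * S) = kk⁻¹ * (-(d1u * (w⁻¹ * S))) := by
    rw [← hTa]; ring
  rw [e1, div_eq_mul_inv]
  have h1 := mul_le_mul_of_nonneg_left hA (inv_nonneg.mpr hkk0.le)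
  linarith [hB, hC, h1]

/-- smooth compactly supported cutoff functions with small L_t image. -/
theorem stmt10 (n m : ℕ) (hn : 0 < n) (hm : 0 < m) (hnm : n ≤ m)
    (U : (Fin n → ℝ) → ℝ) (hU : ContDiff ℝ (⊤ : ℕ∞) U)
    (D2 : ℝ) (hD2 : ∀ x, ‖fderiv ℝ (fun y => fderiv ℝ U y) x‖ ≤ D2)
    (abar : Fin n → ℝ) (habar : ∀ i, 0 < abar i)
    (r1 r2 Ug : ℝ) (hr1 : 0 < r1) (hr2 : 0 < r2) (hUg : 0 < Ug) (Um UM : ℝ)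
    (hUlow : ∀ x, sqnorm (fun i => abar i * x i) + Um ≤ U x)
    (hUup : ∀ x, U x ≤ sqnorm (fun i => abar i * x i) + UM)
    (hgrad1 : ∀ x, r1 * sqnorm x - Ug ≤ ∑ i, gradp U x i * x i)
    (hgrad2 : ∀ x, sqnorm (gradp U x) ≤ r2 * sqnorm x + Ug)
    (A : Matrix (Fin m) (Fin m) ℝ) (Ac : ℝ) (hAc : 0 < Ac)
    (hApd : ∀ v : Fin m → ℝ, Ac * sqnorm v ≤ ∑ j, v j * A.mulVec v j)
    (lam : Matrix (Fin m) (Fin n) ℝ) (lamInv : Matrix (Fin n) (Fin m) ℝ)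
    (hlamInv : lamInv * lam = 1)
    (T : ℝ → ℝ) (hTpos : ∀ t, 0 < T t) (hTdiff : ContDiff ℝ 1 T)
    (hTlim : Tendsto T atTop (nhds 0))
    (E : ℝ) (hE : UM - Um < E)
    (hTlb : ∀ᶠ t in atTop, E / Real.log t ≤ T t)
    (Ttil : ℝ) (hTtil : 0 < Ttil)
    (hTder : ∀ᶠ t in atTop, -(Ttil / t) ≤ deriv T t ∧ deriv T t ≤ 0)
    (δ₀ : ℝ) (hδ₀ : 0 < δ₀) (hTconst : ∀ t ∈ Set.Icc (0:ℝ) δ₀, T t = T 0)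
    :
    ∃ C : ℝ, 0 < C ∧ ∃ η : ℕ → ℝ → St n m → ℝ,
      (∀ k : ℕ, ∀ t : ℝ, ContDiff ℝ (⊤ : ℕ∞) (η k t)) ∧
      (∀ k : ℕ, ∀ t : ℝ, ∀ p : St n m, η k t p ∈ Set.Icc (0 : ℝ) 1) ∧
      (∀ k : ℕ, ∀ t : ℝ, 0 ≤ t → HasCompactSupport (η k t)) ∧
      (∀ t : ℝ, ∀ p : St n m, Tendsto (fun k : ℕ => η k t p) atTop (nhds 1)) ∧
      (∀ k : ℕ, 0 < k → ∀ t : ℝ, 0 ≤ t → ∀ p : St n m,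
        genL U A lam (T t) (η k t) p ≤ C / (k : ℝ)) := by
  classical
  set c : ℝ := 1 - Um with hc
  have hWlow : ∀ q : St n m, sqnorm (fun i => abar i * q.1 i) + 1
      + sqnorm q.2.1 / 2 + sqnorm q.2.2 / 2 ≤ Wfun U q + c := by
    intro q
    have h1 := hUlow q.1
    have : Wfun U q = U q.1 + sqnorm q.2.1 / 2 + sqnorm q.2.2 / 2 := rfl
    rw [this, hc]
    linarith
  have hw : ∀ q : St n m, 0 < Wfun U q + c := by
    intro q
    have := hWlow q
    have h1 := S10.sqnorm_nonneg (fun i => abar i * q.1 i)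
    have h2 := S10.sqnorm_nonneg q.2.1
    have h3 := S10.sqnorm_nonneg q.2.2
    linarith
  have hw1 : ∀ q : St n m, 1 ≤ Wfun U q + c := by
    intro q
    have := hWlow q
    have h1 := S10.sqnorm_nonneg (fun i => abar i * q.1 i)
    have h2 := S10.sqnorm_nonneg q.2.1
    have h3 := S10.sqnorm_nonneg q.2.2
    linarith
  have hsqz : ∀ q : St n m, sqnorm q.2.2 ≤ 2 * (Wfun U q + c) := by
    intro q
    have := hWlow q
    have h1 := S10.sqnorm_nonneg (fun i => abar i * q.1 i)
    have h2 := S10.sqnorm_nonneg q.2.1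
    linarith
  obtain ⟨G1, hG1n, hG1⟩ := S10.d1_bound
  obtain ⟨G2, hG2n, hG2⟩ := S10.d2_bound
  have hev : ∀ᶠ t in atTop, T t < 1 := hTlim.eventually (gt_mem_nhds one_pos)
  obtain ⟨t₀, ht₀⟩ := eventually_atTop.mp hev
  obtain ⟨C₁, hC₁⟩ := (isCompact_Icc (a := (0:ℝ)) (b := t₀)).exists_bound_of_continuousOn
    (hTdiff.continuous.continuousOn)
  set Ts : ℝ := max C₁ 1 with hTsdef
  have hTs0 : 0 < Ts := lt_of_lt_of_le one_pos (le_max_right _ _)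
  have hTsb : ∀ t : ℝ, 0 ≤ t → T t ≤ Ts := by
    intro t ht
    rcases le_or_gt t t₀ with h | h
    · have h2 := hC₁ t ⟨ht, h⟩
      rw [Real.norm_eq_abs] at h2
      exact le_trans (le_trans (le_abs_self _) h2) (le_max_left _ _)
    · exact le_trans (ht₀ t h.le).le (le_max_right _ _)
  set K : ℝ := ∑ i, ∑ j, |A i j| with hKdef
  have hK0 : 0 ≤ K :=
    Finset.sum_nonneg fun i _ => Finset.sum_nonneg fun j _ => abs_nonneg _
  set C0 : ℝ := G1 * (2 * K) + Ts * (G2 * Ts + G1) * (2 * K) + G1 * Ts * K with hC0def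
  have hC00 : 0 ≤ C0 := by
    rw [hC0def]
    have h2K : 0 ≤ 2 * K := by linarith
    exact add_nonneg (add_nonneg (mul_nonneg hG1n h2K)
      (mul_nonneg (mul_nonneg hTs0.le (add_nonneg (mul_nonneg hG2n hTs0.le) hG1n)) h2K))
      (mul_nonneg (mul_nonneg hG1n hTs0.le) hK0)
  refine ⟨C0 + 1, by linarith,
    fun k t p => S10.gcut ((T t / ((k : ℝ) + 1)) * Real.log (Wfun U p + c)),
    ?_, ?_, ?_, ?_, ?_⟩
  · intro k t
    exact S10.eta_contDiff U hU c (T t / ((k : ℝ) + 1)) hw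
  · intro k t p
    exact S10.gcut_mem_Icc _
  · intro k t _
    exact S10.eta_hcs U abar habar c hWlow (T t / ((k : ℝ) + 1))
      (div_pos (hTpos t) (by positivity))
  · intro t p
    have hwp := hw1 p
    have hl0 : 0 ≤ Real.log (Wfun U p + c) := Real.log_nonneg hwp
    apply tendsto_atTop_of_eventually_const
      (i₀ := ⌈T t * Real.log (Wfun U p + c)⌉₊)
    intro k hk
    apply S10.gcut_eq_one
    have hk1 : T t * Real.log (Wfun U p + c) ≤ (k : ℝ) + 1 := by
      calc T t * Real.log (Wfun U p + c) ≤ (⌈T t * Real.log (Wfun U p + c)⌉₊ : ℝ) :=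
        Nat.le_ceil _
      _ ≤ (k : ℝ) := Nat.cast_le.mpr hk
      _ ≤ (k : ℝ) + 1 := by linarith
    rw [div_mul_eq_mul_div, div_le_one (by positivity)]
    exact hk1
  · intro k hk t ht p
    have hkR : (0 : ℝ) < (k : ℝ) := by exact_mod_cast hk
    rw [S10.genL_eta U hU c (T t / ((k : ℝ) + 1)) hw A lam (T t) p]
    have hSb : |∑ i, ∑ j, A i j * p.2.2 i * p.2.2 j| ≤ 2 * K * (Wfun U p + c) := by
      calc |∑ i, ∑ j, A i j * p.2.2 i * p.2.2 j| ≤ K * sqnorm p.2.2 := by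
            rw [hKdef]; exact S10.S_bound A p.2.2
      _ ≤ K * (2 * (Wfun U p + c)) := mul_le_mul_of_nonneg_left (hsqz p) hK0
      _ = 2 * K * (Wfun U p + c) := by ring
    have htrb : |A.trace| ≤ K := by rw [hKdef]; exact S10.trace_bound A
    have hb := bound_aux (T t) (T t / ((k : ℝ) + 1)) (Wfun U p + c)
      (∑ i, ∑ j, A i j * p.2.2 i * p.2.2 j) A.trace
      (S10.d1 ((T t / ((k : ℝ) + 1)) * Real.log (Wfun U p + c)))
      (S10.d2 ((T t / ((k : ℝ) + 1)) * Real.log (Wfun U p + c)))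
      G1 G2 K ((k : ℝ) + 1) Ts (hTpos t)
      (by linarith [Nat.cast_nonneg (α := ℝ) k]) rfl (hw1 p) hSb htrb hK0
      (hG1 _) (hG2 _) (hTsb t ht) hTs0
    have hstep : C0 / ((k : ℝ) + 1) ≤ (C0 + 1) / (k : ℝ) := by
      rw [div_le_div_iff₀ (by positivity) hkR]
      nlinarith [hC00, hkR]
    refine le_trans ?_ hstep
    rw [hC0def]
    exact hb
end
end
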